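/- arXiv:2207.00851 — 7 statements merged into one kernel-verified Lean document; each statement's English description precedes it below -/
import Mathlib

section
/- If the left action ▷ of V on D is functionally complete (i.e. for every function ζ : V(I,Γ) → D(X,Y) there is a unique morphism f : Γ ▷ X → Y such that f ∘ (γ ▷ X) ∘ λ⁻¹_X = ζ(γ) for all points γ : I → Γ), then every functor F : C → D has a unique strength, and every natural transformation between strong functors C → D is strong. -/
open CategoryTheory MonoidalCategory

universe v₁ v₂ v₃ u₁ u₂ u₃

/-- A left action of a monoidal category `V` on a category `C`. -/
structure LeftAction (V : Type u₁) [Category.{v₁} V] [MonoidalCategory V]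
    (C : Type u₂) [Category.{v₂} C] where
  F : V ⥤ C ⥤ C
  lam : ∀ X : C, (F.obj (𝟙_ V)).obj X ≅ X
  lam_natural : ∀ {X Y : C} (f : X ⟶ Y),
    (F.obj (𝟙_ V)).map f ≫ (lam Y).hom = (lam X).hom ≫ f
  assoc : ∀ (Γ' Γ : V) (X : C),
    (F.obj (Γ' ⊗ Γ)).obj X ≅ (F.obj Γ').obj ((F.obj Γ).obj X)
  assoc_natural : ∀ {Γ' Δ' Γ Δ : V} (u : Γ' ⟶ Δ') (v : Γ ⟶ Δ) {X Y : C} (f : X ⟶ Y),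
    (F.map (u ⊗ₘ v)).app X ≫ (F.obj (Δ' ⊗ Δ)).map f ≫ (assoc Δ' Δ Y).hom
      = (assoc Γ' Γ X).hom ≫ (F.map u).app ((F.obj Γ).obj X)
          ≫ (F.obj Δ').map ((F.map v).app X ≫ (F.obj Δ).map f)
  triangle : ∀ (Γ : V) (X : C),
    (F.map (ρ_ Γ).inv).app X ≫ (assoc Γ (𝟙_ V) X).hom ≫ (F.obj Γ).map (lam X).hom = 𝟙 _
  unit_assoc : ∀ (Γ : V) (X : C),
    (assoc (𝟙_ V) Γ X).hom ≫ (lam ((F.obj Γ).obj X)).hom = (F.map (λ_ Γ).hom).app X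
  pentagon : ∀ (Γ₁ Γ₂ Γ₃ : V) (X : C),
    (F.map (α_ Γ₁ Γ₂ Γ₃).hom).app X ≫ (assoc Γ₁ (Γ₂ ⊗ Γ₃) X).hom
        ≫ (F.obj Γ₁).map (assoc Γ₂ Γ₃ X).hom
      = (assoc (Γ₁ ⊗ Γ₂) Γ₃ X).hom ≫ (assoc Γ₁ Γ₂ ((F.obj Γ₃).obj X)).hom

namespace LeftAction

variable {V : Type u₁} [Category.{v₁} V] [MonoidalCategory V]
variable {C : Type u₂} [Category.{v₂} C] {D : Type u₃} [Category.{v₃} D]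

/-- `a.act Γ X` is the action of `Γ` on an object `X`, written `Γ ▷ X` in the paper. -/
abbrev act (a : LeftAction V C) (Γ : V) (X : C) : C := (a.F.obj Γ).obj X

/-- The action of `Γ` on a morphism, `Γ ▷ f`. -/
abbrev actMap (a : LeftAction V C) (Γ : V) {X Y : C} (f : X ⟶ Y) :
    a.act Γ X ⟶ a.act Γ Y := (a.F.obj Γ).map f

/-- The action of a morphism of `V` on an object, `u ▷ X`. -/
abbrev actHom (a : LeftAction V C) {Γ Δ : V} (u : Γ ⟶ Δ) (X : C) :
    a.act Γ X ⟶ a.act Δ X := (a.F.map u).app X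

/-- Applying a morphism `f : Γ ▷ X ⟶ Y` to a point `γ : I ⟶ Γ`,
written `f⁻(γ)` in the paper. -/
def papp (a : LeftAction V C) {Γ : V} {X Y : C}
    (f : a.act Γ X ⟶ Y) (γ : 𝟙_ V ⟶ Γ) : X ⟶ Y :=
  (a.lam X).inv ≫ a.actHom γ X ≫ f

end LeftAction

/-- A strength for a functor `F : C ⥤ D`, with respect to left actions of `V`
on `C` and on `D`. -/
structure Strength {V : Type u₁} [Category.{v₁} V] [MonoidalCategory V]
    {C : Type u₂} [Category.{v₂} C] {D : Type u₃} [Category.{v₃} D]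
    (a : LeftAction V C) (b : LeftAction V D) (F : C ⥤ D) where
  str : ∀ (Γ : V) (X : C), b.act Γ (F.obj X) ⟶ F.obj (a.act Γ X)
  natural_fst : ∀ {Γ Δ : V} (u : Γ ⟶ Δ) (X : C),
    b.actHom u (F.obj X) ≫ str Δ X = str Γ X ≫ F.map (a.actHom u X)
  natural_snd : ∀ (Γ : V) {X Y : C} (f : X ⟶ Y),
    b.actMap Γ (F.map f) ≫ str Γ Y = str Γ X ≫ F.map (a.actMap Γ f)
  str_unit : ∀ X : C, str (𝟙_ V) X ≫ F.map (a.lam X).hom = (b.lam (F.obj X)).hom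
  str_assoc : ∀ (Γ' Γ : V) (X : C),
    (b.assoc Γ' Γ (F.obj X)).hom ≫ b.actMap Γ' (str Γ X) ≫ str Γ' (a.act Γ X)
      = str (Γ' ⊗ Γ) X ≫ F.map (a.assoc Γ' Γ X).hom

/-- A strong functor structure on an assignment of objects `obj : C → D` :
operations `F⟨Γ⟩` sending `f : Γ ▷ X ⟶ Y` to `F⟨Γ⟩ f : Γ ▷ F X ⟶ F Y`,
natural in `Γ` and compatible with the unitors and associators. -/
structure StrongFunctorStr {V : Type u₁} [Category.{v₁} V] [MonoidalCategory V]
    {C : Type u₂} [Category.{v₂} C] {D : Type u₃} [Category.{v₃} D]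
    (a : LeftAction V C) (b : LeftAction V D) (obj : C → D) where
  smap : ∀ {Γ : V} {X Y : C}, (a.act Γ X ⟶ Y) → (b.act Γ (obj X) ⟶ obj Y)
  natural : ∀ {Γ Δ : V} (u : Γ ⟶ Δ) {X Y : C} (f : a.act Δ X ⟶ Y),
    smap (a.actHom u X ≫ f) = b.actHom u (obj X) ≫ smap f
  unit : ∀ X : C, smap (a.lam X).hom = (b.lam (obj X)).hom
  comp : ∀ {Γ' Γ : V} {X Y Z : C} (f : a.act Γ X ⟶ Y) (g : a.act Γ' Y ⟶ Z),
    smap ((a.assoc Γ' Γ X).hom ≫ a.actMap Γ' f ≫ g)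
      = (b.assoc Γ' Γ (obj X)).hom ≫ b.actMap Γ' (smap f) ≫ smap g

/-- The strong-naturality condition for `τ : F ⟶ G` with respect to strengths
`sF`, `sG` : `τ_Y ∘ F⟨Γ⟩f = G⟨Γ⟩f ∘ (Γ ▷ τ_X)`, where `F⟨Γ⟩f = F f ∘ str`. -/
def IsStrongNatTrans {V : Type u₁} [Category.{v₁} V] [MonoidalCategory V]
    {C : Type u₂} [Category.{v₂} C] {D : Type u₃} [Category.{v₃} D]
    {a : LeftAction V C} {b : LeftAction V D} {F G : C ⥤ D}
    (sF : Strength a b F) (sG : Strength a b G) (τ : F ⟶ G) : Prop :=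
  ∀ (Γ : V) {X Y : C} (f : a.act Γ X ⟶ Y),
    (sF.str Γ X ≫ F.map f) ≫ τ.app Y = b.actMap Γ (τ.app X) ≫ (sG.str Γ X ≫ G.map f)

/-- Functional completeness of an action: for every function
`ζ : V(I,Γ) → D(X,Y)` there is a unique `f : Γ ▷ X ⟶ Y` whose application to
points is `ζ`. -/
def LeftAction.FunctionallyComplete {V : Type u₁} [Category.{v₁} V]
    [MonoidalCategory V] {D : Type u₃} [Category.{v₃} D]
    (b : LeftAction V D) : Prop :=
  ∀ (Γ : V) (X Y : D) (ζ : (𝟙_ V ⟶ Γ) → (X ⟶ Y)),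
    ∃! f : b.act Γ X ⟶ Y, ∀ γ : 𝟙_ V ⟶ Γ, b.papp f γ = ζ γ


section Statement4Aux

universe v₄ u₄

variable {V : Type u₁} [Category.{v₁} V] [MonoidalCategory V]

section Gen

variable {E : Type u₄} [Category.{v₄} E] (c : LeftAction V E)

theorem aux_papp_def {Γ : V} {X Y : E} (f : c.act Γ X ⟶ Y) (γ : 𝟙_ V ⟶ Γ) :
    c.papp f γ = (c.lam X).inv ≫ (c.F.map γ).app X ≫ f := rfl

theorem aux_papp_comp {Γ : V} {X Y Z : E} (f : c.act Γ X ⟶ Y) (g : Y ⟶ Z)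
    (γ : 𝟙_ V ⟶ Γ) : c.papp (f ≫ g) γ = c.papp f γ ≫ g := by
  simp [aux_papp_def]

theorem aux_papp_actHom {Γ Δ : V} (u : Γ ⟶ Δ) {X Y : E} (f : c.act Δ X ⟶ Y)
    (γ : 𝟙_ V ⟶ Γ) : c.papp ((c.F.map u).app X ≫ f) γ = c.papp f (γ ≫ u) := by
  simp only [aux_papp_def, c.F.map_comp, NatTrans.comp_app, Category.assoc]

theorem aux_lam_inv_natural {X Y : E} (f : X ⟶ Y) :
    (c.lam X).inv ≫ (c.F.obj (𝟙_ V)).map f = f ≫ (c.lam Y).inv := by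
  rw [Iso.inv_comp_eq, ← Category.assoc, ← c.lam_natural f, Category.assoc,
    Iso.hom_inv_id, Category.comp_id]

theorem aux_papp_actMap {Γ : V} {X X' Y : E} (g : X ⟶ X') (f : c.act Γ X' ⟶ Y)
    (γ : 𝟙_ V ⟶ Γ) : c.papp ((c.F.obj Γ).map g ≫ f) γ = g ≫ c.papp f γ := by
  simp only [aux_papp_def]
  rw [← Category.assoc ((c.F.map γ).app X), ← (c.F.map γ).naturality g,
    ← Category.assoc, ← Category.assoc, aux_lam_inv_natural]
  simp [Category.assoc]

/-- key computation : the action of a point of `Γ'` after an associator. -/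
theorem aux_point_assoc {Γ' Γ : V} (γ' : 𝟙_ V ⟶ Γ') (W : E) :
    (c.F.map ((λ_ Γ).inv ≫ (γ' ⊗ₘ 𝟙 Γ))).app W ≫ (c.assoc Γ' Γ W).hom
      = (c.lam ((c.F.obj Γ).obj W)).inv ≫ (c.F.map γ').app ((c.F.obj Γ).obj W) := by
  have hn := c.assoc_natural γ' (𝟙 Γ) (𝟙 W)
  simp only [CategoryTheory.Functor.map_id, NatTrans.id_app, Category.comp_id,
    Category.id_comp] at hn
  have hu : (c.assoc (𝟙_ V) Γ W).hom
      = (c.F.map (λ_ Γ).hom).app W ≫ (c.lam ((c.F.obj Γ).obj W)).inv := by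
    rw [← c.unit_assoc Γ W, Category.assoc, Iso.hom_inv_id, Category.comp_id]
  rw [c.F.map_comp, NatTrans.comp_app, Category.assoc, hn, hu]
  simp only [← Category.assoc]
  rw [← NatTrans.comp_app, ← c.F.map_comp, Iso.inv_hom_id, c.F.map_id,
    NatTrans.id_app, Category.id_comp]

theorem aux_point_assoc_inv {Γ' Γ : V} (γ' : 𝟙_ V ⟶ Γ') (W : E) {T : E}
    (k : (c.F.obj (Γ' ⊗ Γ)).obj W ⟶ T) :
    (c.lam ((c.F.obj Γ).obj W)).inv ≫ (c.F.map γ').app ((c.F.obj Γ).obj W)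
        ≫ (c.assoc Γ' Γ W).inv ≫ k
      = (c.F.map ((λ_ Γ).inv ≫ (γ' ⊗ₘ 𝟙 Γ))).app W ≫ k := by
  rw [← Category.assoc, ← aux_point_assoc c γ' W]
  simp [Category.assoc]

end Gen

section Main

variable {C : Type u₂} [Category.{v₂} C] {D : Type u₃} [Category.{v₃} D]

theorem aux_hom_ext (b : LeftAction V D) (hb : b.FunctionallyComplete)
    {Γ : V} {X Y : D} {f g : b.act Γ X ⟶ Y}
    (h : ∀ γ, b.papp f γ = b.papp g γ) : f = g :=
  (hb Γ X Y fun γ => b.papp g γ).unique h fun _ => rfl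

/-- any point `γ : I ⟶ I` acts as the identity, if the action is functionally
complete. -/
theorem aux_unit_point_id (b : LeftAction V D) (hb : b.FunctionallyComplete)
    (W : D) (γ : 𝟙_ V ⟶ 𝟙_ V) : (b.F.map γ).app W = 𝟙 _ := by
  obtain ⟨f, hf, -⟩ := hb (𝟙_ V) W W (fun _ => 𝟙 W)
  have h1 := hf (𝟙 _)
  have h2 := hf γ
  rw [aux_papp_def, b.F.map_id, NatTrans.id_app, Category.id_comp,
    Iso.inv_comp_eq, Category.comp_id] at h1
  rw [aux_papp_def, h1] at h2
  calc (b.F.map γ).app W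
      = (b.lam W).hom ≫ ((b.lam W).inv ≫ (b.F.map γ).app W ≫ (b.lam W).hom)
          ≫ (b.lam W).inv := by simp
    _ = 𝟙 _ := by rw [h2]; simp

/-- if `D` has two different parallel morphisms, then `I` has a unique point. -/
theorem aux_unit_point_unique (b : LeftAction V D) (hb : b.FunctionallyComplete)
    {W Z : D} {g h : W ⟶ Z} (hgh : g ≠ h) (γ : 𝟙_ V ⟶ 𝟙_ V) : γ = 𝟙 _ := by
  classical
  by_contra hne
  obtain ⟨f, hf, -⟩ := hb (𝟙_ V) W Z (fun γ' => if γ' = γ then g else h)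
  have h1 := hf γ
  have h2 := hf (𝟙 _)
  rw [if_pos rfl] at h1
  rw [if_neg (fun e => hne e.symm)] at h2
  rw [aux_papp_def, aux_unit_point_id b hb, Category.id_comp] at h1 h2
  exact hgh (h1.symm.trans h2)

/-- the canonical strength map. -/
noncomputable def mkStr (a : LeftAction V C) (b : LeftAction V D)
    (hb : b.FunctionallyComplete) (F : C ⥤ D) (Γ : V) (X : C) :
    b.act Γ (F.obj X) ⟶ F.obj (a.act Γ X) :=
  ((hb Γ (F.obj X) (F.obj (a.act Γ X))
    fun γ => F.map ((a.lam X).inv ≫ (a.F.map γ).app X)).exists).choose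

theorem mkStr_papp (a : LeftAction V C) (b : LeftAction V D)
    (hb : b.FunctionallyComplete) (F : C ⥤ D) (Γ : V) (X : C) (γ : 𝟙_ V ⟶ Γ) :
    b.papp (mkStr a b hb F Γ X) γ = F.map ((a.lam X).inv ≫ (a.F.map γ).app X) :=
  ((hb Γ (F.obj X) (F.obj (a.act Γ X))
    fun γ => F.map ((a.lam X).inv ≫ (a.F.map γ).app X)).exists).choose_spec γ

theorem mkStr_natural_fst (a : LeftAction V C) (b : LeftAction V D)
    (hb : b.FunctionallyComplete) (F : C ⥤ D) {Γ Δ : V} (u : Γ ⟶ Δ) (X : C) :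
    (b.F.map u).app (F.obj X) ≫ mkStr a b hb F Δ X
      = mkStr a b hb F Γ X ≫ F.map ((a.F.map u).app X) := by
  refine aux_hom_ext b hb fun γ => ?_
  rw [aux_papp_actHom, aux_papp_comp, mkStr_papp, mkStr_papp, ← F.map_comp]
  rw [Category.assoc, ← NatTrans.comp_app, ← a.F.map_comp]

/-- every strength has the canonical point-application property. -/
theorem strength_papp (a : LeftAction V C) (b : LeftAction V D)
    (hb : b.FunctionallyComplete) (F : C ⥤ D) (s : Strength a b F)
    (Γ : V) (X : C) (γ : 𝟙_ V ⟶ Γ) :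
    b.papp (s.str Γ X) γ = F.map ((a.lam X).inv ≫ (a.F.map γ).app X) := by
  have h1 : s.str (𝟙_ V) X = (b.lam (F.obj X)).hom ≫ F.map (a.lam X).inv := by
    rw [← cancel_mono (F.map (a.lam X).hom), s.str_unit X, Category.assoc,
      ← F.map_comp, Iso.inv_hom_id, F.map_id, Category.comp_id]
  have h2 : (b.F.map γ).app (F.obj X) ≫ s.str Γ X
      = s.str (𝟙_ V) X ≫ F.map ((a.F.map γ).app X) := s.natural_fst γ X
  rw [aux_papp_def, h2, h1]
  simp only [Category.assoc, Iso.inv_hom_id_assoc, ← F.map_comp]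

/-- the canonical strength. -/
noncomputable def mkStrength (a : LeftAction V C) (b : LeftAction V D)
    (hb : b.FunctionallyComplete) (F : C ⥤ D) : Strength a b F where
  str := mkStr a b hb F
  natural_fst u X := mkStr_natural_fst a b hb F u X
  natural_snd Γ {X Y} f := by
    refine aux_hom_ext b hb fun γ => ?_
    simp only [LeftAction.actMap]
    rw [aux_papp_actMap, aux_papp_comp, mkStr_papp, mkStr_papp, ← F.map_comp,
      ← F.map_comp]
    congr 1
    rw [← Category.assoc, ← aux_lam_inv_natural, Category.assoc, Category.assoc]
    congr 1
    exact (a.F.map γ).naturality f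
  str_unit X := by
    by_cases hD : ∀ (W Z : D) (g h : W ⟶ Z), g = h
    · exact hD _ _ _ _
    · push_neg at hD
      obtain ⟨W, Z, g, h, hgh⟩ := hD
      refine aux_hom_ext b hb fun γ => ?_
      rw [aux_unit_point_unique b hb hgh γ, aux_papp_comp, mkStr_papp,
        aux_papp_def]
      simp only [a.F.map_id, b.F.map_id, NatTrans.id_app, Category.id_comp,
        Category.comp_id, ← F.map_comp, Iso.inv_hom_id, F.map_id]
  str_assoc Γ' Γ X := by
    rw [← Iso.eq_inv_comp]
    refine aux_hom_ext b hb fun γ' => ?_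
    simp only [LeftAction.actMap]
    rw [aux_papp_actMap, mkStr_papp, aux_papp_def,
      aux_point_assoc_inv b γ' (F.obj X), ← Category.assoc,
      mkStr_natural_fst a b hb F, Category.assoc, ← F.map_comp,
      aux_point_assoc a γ' X]

theorem aux_strength_unique (a : LeftAction V C) (b : LeftAction V D)
    (hb : b.FunctionallyComplete) (F : C ⥤ D) (s t : Strength a b F) :
    s = t := by
  have h : s.str = t.str := by
    funext Γ X
    exact aux_hom_ext b hb fun γ => by
      rw [strength_papp a b hb F s, strength_papp a b hb F t]
  cases s; cases t
  cases h
  rfl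

theorem aux_strong_nat (a : LeftAction V C) (b : LeftAction V D)
    (hb : b.FunctionallyComplete) {F G : C ⥤ D}
    (sF : Strength a b F) (sG : Strength a b G)
    (τ : F ⟶ G) : IsStrongNatTrans sF sG τ := by
  intro Γ X Y f
  refine aux_hom_ext b hb fun γ => ?_
  have hL : b.papp ((sF.str Γ X ≫ F.map f) ≫ τ.app Y) γ
      = F.map (((a.lam X).inv ≫ (a.F.map γ).app X) ≫ f) ≫ τ.app Y := by
    rw [aux_papp_comp, aux_papp_comp, strength_papp a b hb F sF]
    simp [F.map_comp]
  have hR : b.papp (b.actMap Γ (τ.app X) ≫ (sG.str Γ X ≫ G.map f)) γ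
      = τ.app X ≫ G.map (((a.lam X).inv ≫ (a.F.map γ).app X) ≫ f) := by
    show b.papp ((b.F.obj Γ).map (τ.app X) ≫ (sG.str Γ X ≫ G.map f)) γ = _
    rw [aux_papp_actMap, aux_papp_comp, strength_papp a b hb G sG]
    simp [G.map_comp]
  rw [hL, hR, τ.naturality]

end Main

end Statement4Aux


/-- if the action of `V` on `D` is functionally complete, then
every functor `F : C ⥤ D` has a strength, this strength is unique, and every
natural transformation between strong functors `C ⥤ D` is strong. -/
theorem statement4 {V : Type u₁} [Category.{v₁} V] [MonoidalCategory V]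
    {C : Type u₂} [Category.{v₂} C] {D : Type u₃} [Category.{v₃} D]
    (a : LeftAction V C) (b : LeftAction V D)
    (hb : b.FunctionallyComplete) :
    (∀ F : C ⥤ D, Nonempty (Strength a b F)) ∧
    (∀ (F : C ⥤ D) (s t : Strength a b F), s = t) ∧
    (∀ (F G : C ⥤ D) (sF : Strength a b F) (sG : Strength a b G) (τ : F ⟶ G),
      IsStrongNatTrans sF sG τ) := by
  refine ⟨fun F => ⟨mkStrength a b hb F⟩, fun F s t => aux_strength_unique a b hb F s t,
    fun F G sF sG τ => aux_strong_nat a b hb sF sG τ⟩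
end

section
/- Suppose the left action ▷ of V on D is well-pointed, i.e. the map f ↦ f⁻ (applying morphisms Γ ▷ X → Y to points γ : I → Γ) is injective. Then a functor F : C → D admits a strength if and only if for every Γ, X there exists a morphism str_{Γ,X} : Γ ▷ FX → F(Γ ▷ X) satisfying str_{Γ,X}⁻(γ) = F((id_{Γ▷X})⁻(γ)) for all points γ : I → Γ; in that case str is the unique strength for F. Moreover, every natural transformation between strong functors C → D is then automatically strong. -/
open CategoryTheory MonoidalCategory

universe v₁ v₂ v₃ u₁ u₂ u₃

/-- Well-pointedness of an action: application to points is injective. -/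
def LeftAction.WellPointed {V : Type u₁} [Category.{v₁} V]
    [MonoidalCategory V] {D : Type u₃} [Category.{v₃} D]
    (b : LeftAction V D) : Prop :=
  ∀ (Γ : V) (X Y : D) (f g : b.act Γ X ⟶ Y),
    (∀ γ : 𝟙_ V ⟶ Γ, b.papp f γ = b.papp g γ) → f = g

section Helpers

variable {V : Type u₁} [Category.{v₁} V] [MonoidalCategory V]
variable {C : Type u₂} [Category.{v₂} C] {D : Type u₃} [Category.{v₃} D]

lemma papp_comp (a : LeftAction V C) {Γ : V} {X Y Z : C}
    (f : a.act Γ X ⟶ Y) (g : Y ⟶ Z) (γ : 𝟙_ V ⟶ Γ) :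
    a.papp (f ≫ g) γ = a.papp f γ ≫ g := by
  simp [LeftAction.papp]

lemma actHom_comp (a : LeftAction V C) {Γ Δ Θ : V} (γ : Γ ⟶ Δ) (u : Δ ⟶ Θ) (X : C) :
    a.actHom (γ ≫ u) X = a.actHom γ X ≫ a.actHom u X := by
  simp only [LeftAction.actHom, a.F.map_comp, NatTrans.comp_app]

lemma papp_actHom (a : LeftAction V C) {Γ Δ : V} (u : Γ ⟶ Δ) {X Y : C}
    (f : a.act Δ X ⟶ Y) (γ : 𝟙_ V ⟶ Γ) :
    a.papp (a.actHom u X ≫ f) γ = a.papp f (γ ≫ u) := by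
  simp [LeftAction.papp, actHom_comp]

lemma papp_actMap (a : LeftAction V C) {Γ : V} {X Y Z : C} (f : X ⟶ Y)
    (h : a.act Γ Y ⟶ Z) (γ : 𝟙_ V ⟶ Γ) :
    a.papp (a.actMap Γ f ≫ h) γ = f ≫ a.papp h γ := by
  have h1 : (a.F.map γ).app X ≫ (a.F.obj Γ).map f
      = (a.F.obj (𝟙_ V)).map f ≫ (a.F.map γ).app Y := ((a.F.map γ).naturality f).symm
  have h2 : (a.lam X).inv ≫ (a.F.obj (𝟙_ V)).map f = f ≫ (a.lam Y).inv := by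
    rw [Iso.inv_comp_eq, ← Category.assoc, Iso.eq_comp_inv, a.lam_natural]
  simp only [LeftAction.papp, LeftAction.actHom, LeftAction.actMap]
  rw [← Category.assoc, ← Category.assoc, Category.assoc (a.lam X).inv, h1,
    ← Category.assoc, ← Category.assoc, h2]
  simp

/-- The key computation: a point of `Γ'` acting on `Γ ▷ X` can be rewritten
through the associator. -/
lemma point_assoc (a : LeftAction V C) {Γ' : V} (γ' : 𝟙_ V ⟶ Γ') (Γ : V) (X : C) :
    (a.lam (a.act Γ X)).inv ≫ a.actHom γ' (a.act Γ X)
      = a.actHom ((λ_ Γ).inv ≫ (γ' ⊗ₘ 𝟙 Γ)) X ≫ (a.assoc Γ' Γ X).hom := by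
  have h1 := a.assoc_natural γ' (𝟙 Γ) (𝟙 X)
  simp only [CategoryTheory.Functor.map_id, Category.id_comp, Category.comp_id,
    NatTrans.id_app] at h1
  -- h1 : (a.F.map (γ' ⊗ 𝟙 Γ)).app X ≫ (a.assoc Γ' Γ X).hom
  --    = (a.assoc (𝟙_ V) Γ X).hom ≫ (a.F.map γ').app (a.act Γ X)
  have h2 : (a.assoc (𝟙_ V) Γ X).hom
      = (a.F.map (λ_ Γ).hom).app X ≫ (a.lam (a.act Γ X)).inv := by
    rw [Iso.eq_comp_inv]; exact a.unit_assoc Γ X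
  have h3 : (a.F.map (λ_ Γ).inv).app X ≫ (a.F.map (λ_ Γ).hom).app X = 𝟙 _ := by
    rw [← NatTrans.comp_app, ← a.F.map_comp, Iso.inv_hom_id, a.F.map_id]; rfl
  simp only [LeftAction.actHom, a.F.map_comp, NatTrans.comp_app, Category.assoc]
  rw [h1, h2, ← Category.assoc, ← Category.assoc, h3, Category.id_comp]

end Helpers

/-- if the action of `V` on `D` is well-pointed then a functor
`F : C ⥤ D` admits a strength iff there is a family
`str_{Γ,X} : Γ ▷ FX ⟶ F(Γ ▷ X)` with `str_{Γ,X}⁻(γ) = F((𝟙_{Γ▷X})⁻(γ))` for all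
points `γ`; strengths are unique (and any strength satisfies the above
pointwise condition); moreover every natural transformation between strong
functors `C ⥤ D` is strong. -/

theorem statement6 {V : Type u₁} [Category.{v₁} V] [MonoidalCategory V]
    {C : Type u₂} [Category.{v₂} C] {D : Type u₃} [Category.{v₃} D]
    (a : LeftAction V C) (b : LeftAction V D) (hb : b.WellPointed) :
    (∀ F : C ⥤ D,
      Nonempty (Strength a b F) ↔
        ∃ str : ∀ (Γ : V) (X : C), b.act Γ (F.obj X) ⟶ F.obj (a.act Γ X),
          ∀ (Γ : V) (X : C) (γ : 𝟙_ V ⟶ Γ),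
            b.papp (str Γ X) γ = F.map (a.papp (𝟙 (a.act Γ X)) γ)) ∧
    (∀ (F : C ⥤ D) (s : Strength a b F) (Γ : V) (X : C) (γ : 𝟙_ V ⟶ Γ),
      b.papp (s.str Γ X) γ = F.map (a.papp (𝟙 (a.act Γ X)) γ)) ∧
    (∀ (F : C ⥤ D) (s t : Strength a b F), s = t) ∧
    (∀ (F G : C ⥤ D) (sF : Strength a b F) (sG : Strength a b G) (τ : F ⟶ G),
      IsStrongNatTrans sF sG τ) := by
  -- Any strength satisfies the pointwise condition.
  have hA : ∀ (F : C ⥤ D) (s : Strength a b F) (Γ : V) (X : C) (γ : 𝟙_ V ⟶ Γ),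
      b.papp (s.str Γ X) γ = F.map (a.papp (𝟙 (a.act Γ X)) γ) := by
    intro F s Γ X γ
    have hu : s.str (𝟙_ V) X = (b.lam (F.obj X)).hom ≫ F.map (a.lam X).inv := by
      rw [← s.str_unit X, Category.assoc, ← F.map_comp, Iso.hom_inv_id, F.map_id,
        Category.comp_id]
    have := s.natural_fst γ X
    simp only [LeftAction.papp, Category.assoc, this, hu]
    simp only [Iso.inv_hom_id_assoc, ← F.map_comp, Category.comp_id]
  refine ⟨?_, hA, ?_, ?_⟩
  · intro F
    constructor
    · rintro ⟨s⟩; exact ⟨s.str, hA F s⟩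
    · rintro ⟨str, H⟩
      -- naturality in the first variable
      have nat_fst : ∀ {Γ Δ : V} (u : Γ ⟶ Δ) (X : C),
          b.actHom u (F.obj X) ≫ str Δ X = str Γ X ≫ F.map (a.actHom u X) := by
        intro Γ Δ u X
        apply hb; intro γ
        rw [papp_actHom, papp_comp, H, H, ← F.map_comp]
        congr 1
        simp [LeftAction.papp, actHom_comp]
      refine ⟨⟨str, fun u X => nat_fst u X, ?_, ?_, ?_⟩⟩
      · -- natural_snd
        intro Γ X Y f
        apply hb; intro γ
        rw [papp_actMap, papp_comp, H, H, ← F.map_comp, ← F.map_comp]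
        congr 1
        have := papp_actMap a (Γ := Γ) f (𝟙 _) γ
        simp only [Category.comp_id] at this
        rw [← this]
        simp [LeftAction.papp]
      · -- str_unit
        intro X
        have h1 := H (𝟙_ V) X (𝟙 (𝟙_ V))
        simp only [LeftAction.papp, LeftAction.actHom, CategoryTheory.Functor.map_id,
          NatTrans.id_app, Category.id_comp, Category.comp_id] at h1
        rw [Iso.inv_comp_eq] at h1
        rw [h1, Category.assoc, ← F.map_comp, Iso.inv_hom_id, F.map_id, Category.comp_id]
      · -- str_assoc
        intro Γ' Γ X
        have main : b.actMap Γ' (str Γ X) ≫ str Γ' (a.act Γ X)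
            = (b.assoc Γ' Γ (F.obj X)).inv ≫ str (Γ' ⊗ Γ) X
                ≫ F.map (a.assoc Γ' Γ X).hom := by
          apply hb; intro γ'
          have hL : b.papp (b.actMap Γ' (str Γ X) ≫ str Γ' (a.act Γ X)) γ'
              = str Γ X ≫ F.map ((a.lam (a.act Γ X)).inv ≫ a.actHom γ' (a.act Γ X)) := by
            rw [papp_actMap, H]
            simp [LeftAction.papp]
          have hR : b.papp ((b.assoc Γ' Γ (F.obj X)).inv ≫ str (Γ' ⊗ Γ) X
                ≫ F.map (a.assoc Γ' Γ X).hom) γ'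
              = str Γ X ≫ F.map (a.actHom ((λ_ Γ).inv ≫ (γ' ⊗ₘ 𝟙 Γ)) X
                  ≫ (a.assoc Γ' Γ X).hom) := by
            show (b.lam _).inv ≫ b.actHom γ' _ ≫ _ = _
            rw [← Category.assoc ((b.lam _).inv), point_assoc b γ' Γ (F.obj X)]
            simp only [Category.assoc, Iso.hom_inv_id_assoc]
            rw [← Category.assoc, nat_fst, Category.assoc, ← F.map_comp]
          rw [hL, hR, point_assoc a γ' Γ X]
        rw [main]
        simp
  · -- uniqueness
    intro F s t
    have h : s.str = t.str := by
      funext Γ X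
      apply hb; intro γ
      rw [hA F s, hA F t]
    cases s; cases t; cases h; rfl
  · -- strong naturality
    intro F G sF sG τ Γ X Y f
    rw [Category.assoc]
    apply hb; intro γ
    rw [papp_actMap, papp_comp, papp_comp, hA, hA,
      ← Category.assoc (F.map _), ← F.map_comp, τ.naturality, G.map_comp]
end

section
/- In the Cartesian monoidal category of pointed sets acting on itself, the assignment Φ_Γ ζ (γ, x) = ζ(⋆)(x), for ζ : Set⋆(1, Γ) → Set⋆(X, Y), is a weak functional completeness structure, and it is the unique weak functional completeness structure for this action, even though the action is not well-pointed (every object has exactly one point). -/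
open CategoryTheory MonoidalCategory

universe v₁ v₂ v₃ u₁ u₂ u₃

/-- The action of a monoidal category of itself, by the tensor. -/
def selfAction (V : Type u₁) [Category.{v₁} V] [MonoidalCategory V] :
    LeftAction V V where
  F := curriedTensor V
  lam X := λ_ X
  lam_natural f := by simp
  assoc Γ' Γ X := α_ Γ' Γ X
  assoc_natural u v f := by
    simp [MonoidalCategory.tensorHom_def]
  triangle Γ X := by
    simp
  unit_assoc Γ X := by
    simp
  pentagon Γ₁ Γ₂ Γ₃ X := by
    simp [MonoidalCategory.pentagon]
/-- A weak functional completeness structure for an action of `V` on `D`: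
an assignment of a morphism `Φ_Γ ζ : Γ ▷ X ⟶ Y` with `(Φ_Γ ζ)⁻ = ζ` to each
function `ζ : V(I,Γ) → D(X,Y)`, natural in `Γ`, `X`, `Y` and compatible with
the tensor of `V`. -/
structure WFCStructure {V : Type u₁} [Category.{v₁} V] [MonoidalCategory V]
    {D : Type u₃} [Category.{v₃} D] (b : LeftAction V D) where
  Phi : ∀ (Γ : V) (X Y : D), ((𝟙_ V ⟶ Γ) → (X ⟶ Y)) → (b.act Γ X ⟶ Y)
  papp_Phi : ∀ (Γ : V) (X Y : D) (ζ : (𝟙_ V ⟶ Γ) → (X ⟶ Y)) (γ : 𝟙_ V ⟶ Γ),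
    b.papp (Phi Γ X Y ζ) γ = ζ γ
  natural_ctx : ∀ {Γ Δ : V} (u : Γ ⟶ Δ) (X Y : D)
      (ζ : (𝟙_ V ⟶ Δ) → (X ⟶ Y)),
    b.actHom u X ≫ Phi Δ X Y ζ = Phi Γ X Y (fun γ => ζ (γ ≫ u))
  natural_dom : ∀ (Γ : V) {X' X Y : D} (h : X' ⟶ X)
      (ζ : (𝟙_ V ⟶ Γ) → (X ⟶ Y)),
    b.actMap Γ h ≫ Phi Γ X Y ζ = Phi Γ X' Y (fun γ => h ≫ ζ γ)
  natural_cod : ∀ (Γ : V) {X Y Y' : D} (k : Y ⟶ Y')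
      (ζ : (𝟙_ V ⟶ Γ) → (X ⟶ Y)),
    Phi Γ X Y ζ ≫ k = Phi Γ X Y' (fun γ => ζ γ ≫ k)
  tensor : ∀ (Γ' Γ : V) (X Y : D) (ζ : (𝟙_ V ⟶ Γ' ⊗ Γ) → (X ⟶ Y)),
    Phi (Γ' ⊗ Γ) X Y ζ
      = (b.assoc Γ' Γ X).hom ≫
          Phi Γ' (b.act Γ X) Y (fun γ' =>
            Phi Γ X Y (fun γ => ζ ((ρ_ (𝟙_ V)).inv ≫ (γ' ⊗ₘ γ))))
open Limits in
/-- The Cartesian monoidal structure on the category of pointed sets. -/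
noncomputable instance : CartesianMonoidalCategory Pointed.{u₂} :=
  CartesianMonoidalCategory.ofChosenFiniteProducts
    { cone := asEmptyCone (Pointed.of PUnit.unit)
      isLimit := IsTerminal.ofUniqueHom (fun X => ⟨fun _ => PUnit.unit, rfl⟩)
        (fun X m => by apply Pointed.Hom.ext; funext t; rfl) }
  (fun X Y =>
    { cone := BinaryFan.mk (P := Pointed.of (X.point, Y.point))
        ⟨Prod.fst, rfl⟩ ⟨Prod.snd, rfl⟩
      isLimit := BinaryFan.IsLimit.mk _
        (fun f g => ⟨fun t => (f.toFun t, g.toFun t), by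
          simp only [f.map_point, g.map_point]; rfl⟩)
        (fun f g => rfl) (fun f g => rfl)
        (fun f g m h₁ h₂ => by
          apply Pointed.Hom.ext
          funext t
          exact Prod.ext (congrFun (congrArg Pointed.Hom.toFun h₁) t)
            (congrFun (congrArg Pointed.Hom.toFun h₂) t)) })

/-- The unique point of a pointed set `Γ`, as a morphism `𝟙_ Set⋆ ⟶ Γ`. -/
def thePoint (Γ : Pointed.{u₂}) : 𝟙_ Pointed.{u₂} ⟶ Γ :=
  ⟨fun _ => Γ.point, rfl⟩


section Aux

open CartesianMonoidalCategory

/-- Every pointed set has a unique point. -/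
lemma point_unique {Γ : Pointed.{u₂}} (γ γ' : 𝟙_ Pointed.{u₂} ⟶ Γ) : γ = γ' := by
  apply Pointed.Hom.ext
  funext t
  have h1 : γ.toFun PUnit.unit = Γ.point := γ.map_point
  have h2 : γ'.toFun PUnit.unit = Γ.point := γ'.map_point
  exact h1.trans h2.symm

lemma leftUnitor_hom_eq_snd (X : Pointed.{u₂}) :
    (λ_ X).hom = CartesianMonoidalCategory.snd (𝟙_ Pointed.{u₂}) X := by
  have h := leftUnitor_inv_snd X
  rw [Iso.inv_comp_eq, Category.comp_id] at h
  exact h.symm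

lemma selfAction_actHom {Γ Δ : Pointed.{u₂}} (u : Γ ⟶ Δ) (X : Pointed.{u₂}) :
    (selfAction Pointed.{u₂}).actHom u X = u ▷ X := rfl

lemma selfAction_actMap (Γ : Pointed.{u₂}) {X Y : Pointed.{u₂}} (f : X ⟶ Y) :
    (selfAction Pointed.{u₂}).actMap Γ f = Γ ◁ f := rfl

lemma selfAction_papp {Γ X Y : Pointed.{u₂}} (f : Γ ⊗ X ⟶ Y) (γ : 𝟙_ Pointed.{u₂} ⟶ Γ) :
    (selfAction Pointed.{u₂}).papp f γ = (λ_ X).inv ≫ γ ▷ X ≫ f := rfl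

/-- The canonical weak functional completeness structure on pointed sets. -/
noncomputable def canonicalWFC : WFCStructure (selfAction Pointed.{u₂}) where
  Phi Γ X Y ζ := CartesianMonoidalCategory.snd Γ X ≫ ζ (thePoint Γ)
  papp_Phi Γ X Y ζ γ := by
    erw [selfAction_papp, point_unique γ (thePoint Γ)]
    erw [whiskerRight_snd_assoc]
    simp
  natural_ctx {Γ Δ} u X Y ζ := by
    dsimp only
    rw [point_unique (thePoint Γ ≫ u) (thePoint Δ)]
    rw [show (selfAction Pointed.{u₂}).actHom u X = u ▷ X from rfl]
    erw [whiskerRight_snd_assoc]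
  natural_dom Γ {X' X Y} h ζ := by
    rw [selfAction_actMap]
    erw [whiskerLeft_snd_assoc]
  natural_cod Γ {X Y Y'} k ζ := by exact Category.assoc _ _ _
  tensor Γ' Γ X Y ζ := by
    dsimp only
    rw [point_unique ((ρ_ (𝟙_ Pointed.{u₂})).inv ≫ (thePoint Γ' ⊗ₘ thePoint Γ))
      (thePoint (Γ' ⊗ Γ))]
    show CartesianMonoidalCategory.snd _ _ ≫ _
      = (α_ Γ' Γ X).hom ≫ CartesianMonoidalCategory.snd Γ' (Γ ⊗ X) ≫
          (CartesianMonoidalCategory.snd Γ X ≫ ζ (thePoint (Γ' ⊗ Γ)))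
    rw [associator_hom_snd_snd_assoc]

/-- Every WFC structure on the self-action of pointed sets is the canonical one. -/
lemma wfc_canonical (Φ : WFCStructure (selfAction Pointed.{u₂}))
    (Γ X Y : Pointed.{u₂}) (ζ : (𝟙_ Pointed.{u₂} ⟶ Γ) → (X ⟶ Y)) :
    Φ.Phi Γ X Y ζ = CartesianMonoidalCategory.snd Γ X ≫ ζ (thePoint Γ) := by
  have h1 : Φ.Phi (𝟙_ _) X X (fun _ => 𝟙 X) = (λ_ X).hom := by
    have h := Φ.papp_Phi (𝟙_ _) X X (fun _ => 𝟙 X) (𝟙 _)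
    erw [selfAction_papp] at h
    simp only [MonoidalCategory.id_whiskerRight, Category.id_comp] at h
    rw [Iso.inv_comp_eq, Category.comp_id] at h
    exact h
  have h2 : Φ.Phi Γ X X (fun _ => 𝟙 X) = CartesianMonoidalCategory.snd Γ X := by
    have h := Φ.natural_ctx (toUnit Γ) X X (fun _ => 𝟙 X)
    rw [selfAction_actHom, h1] at h
    rw [← h, leftUnitor_hom_eq_snd]
    erw [whiskerRight_snd]
  have h3 := Φ.natural_cod Γ (ζ (thePoint Γ)) (fun _ => 𝟙 X)
  rw [h2] at h3
  have hz : (fun γ : 𝟙_ Pointed.{u₂} ⟶ Γ => 𝟙 X ≫ ζ (thePoint Γ)) = ζ := by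
    funext γ
    rw [Category.id_comp, point_unique (thePoint Γ) γ]
  rw [hz] at h3
  exact h3.symm

/-- A two-element pointed set. -/
def BB : Pointed.{u₂} := Pointed.of (ULift.up.{u₂} false)

def gmor : BB.{u₂} ⊗ BB.{u₂} ⟶ BB.{u₂} :=
  ⟨fun p => if p.1.down then ULift.up false else p.2, rfl⟩

end Aux

/-- for the Cartesian monoidal category of pointed sets acting on
itself, the assignment `Φ_Γ ζ = ζ(⋆) ∘ snd` (i.e. `Φ_Γ ζ (γ, x) = ζ(⋆)(x)`)
is a weak functional completeness structure; it is the unique one; the action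
is not well-pointed; and every object has exactly one point. -/
theorem statement8 :
    (∃ Φ : WFCStructure (selfAction Pointed.{u₂}),
      ∀ (Γ X Y : Pointed.{u₂}) (ζ : (𝟙_ Pointed.{u₂} ⟶ Γ) → (X ⟶ Y)),
        Φ.Phi Γ X Y ζ = CartesianMonoidalCategory.snd Γ X ≫ ζ (thePoint Γ)) ∧
    (∀ Φ Ψ : WFCStructure (selfAction Pointed.{u₂}), Φ = Ψ) ∧
    ¬ (selfAction Pointed.{u₂}).WellPointed ∧
    (∀ Γ : Pointed.{u₂}, ∃! _γ : 𝟙_ Pointed.{u₂} ⟶ Γ, True) := by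
  refine ⟨⟨canonicalWFC, fun Γ X Y ζ => rfl⟩, ?_, ?_, ?_⟩
  · intro Φ Ψ
    have hPhi : Φ.Phi = Ψ.Phi := by
      funext Γ X Y ζ
      rw [wfc_canonical Φ, wfc_canonical Ψ]
    cases Φ; cases Ψ
    cases hPhi
    rfl
  · intro hwp
    have hfg := hwp BB BB BB (CartesianMonoidalCategory.snd BB BB) gmor (fun γ => by
      rw [point_unique γ (thePoint BB)]
      apply Pointed.Hom.ext
      funext x
      rfl)
    have h2 : (true : Bool) = false :=
      congrArg ULift.down
        (congrFun (congrArg Pointed.Hom.toFun hfg) (ULift.up true, ULift.up true))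
    exact Bool.noConfusion h2
  · intro Γ
    exact ⟨thePoint Γ, trivial, fun γ _ => point_unique γ (thePoint Γ)⟩
end

section
/- For a monad T = (T, η, μ) on a category C equipped with a left action ▷ of a monoidal category V, there is a bijection between (1) strong monad structures on T (Kleisli-extension presentations ♯ : C(Γ ▷ X, TY) → C(Γ ▷ TX, TY) natural in Γ satisfying the three strong-monad laws, with underlying monad T) and (2) strengths str for the functor T that make η and μ strong natural transformations, i.e. such that str_{Γ,X} ∘ (Γ ▷ η_X) = η_{Γ▷X} and str_{Γ,X} ∘ (Γ ▷ μ_X) = μ_{Γ▷X} ∘ T(str_{Γ,X}) ∘ str_{Γ,TX}. -/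
open CategoryTheory MonoidalCategory

universe v₁ v₂ v₃ u₁ u₂ u₃

/-- A strong monad structure (Kleisli-extension presentation) over the
underlying data of a monad `T`, with respect to a left action of `V` on `C`. -/
structure StrongMonadStr {V : Type u₁} [Category.{v₁} V] [MonoidalCategory V]
    {C : Type u₂} [Category.{v₂} C] (a : LeftAction V C) (T : Monad C) where
  ext : ∀ {Γ : V} {X Y : C}, (a.act Γ X ⟶ T.obj Y) → (a.act Γ (T.obj X) ⟶ T.obj Y)
  natural : ∀ {Γ Δ : V} (u : Γ ⟶ Δ) {X Y : C} (f : a.act Δ X ⟶ T.obj Y),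
    ext (a.actHom u X ≫ f) = a.actHom u (T.obj X) ≫ ext f
  law_unit : ∀ X : C, ext ((a.lam X).hom ≫ T.η.app X) = (a.lam (T.obj X)).hom
  law_ext_unit : ∀ {Γ : V} {X Y : C} (f : a.act Γ X ⟶ T.obj Y),
    a.actMap Γ (T.η.app X) ≫ ext f = f
  law_assoc : ∀ {Γ' Γ : V} {X Y Z : C}
      (f : a.act Γ X ⟶ T.obj Y) (g : a.act Γ' Y ⟶ T.obj Z),
    (a.assoc Γ' Γ (T.obj X)).hom ≫ a.actMap Γ' (ext f) ≫ ext g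
      = ext ((a.assoc Γ' Γ X).hom ≫ a.actMap Γ' f ≫ ext g)

/-- The underlying ordinary monad of the strong monad structure `S` is `T`
itself: the functor part and the multiplication induced by the Kleisli
extension agree with those of `T`. -/
def StrongMonadStr.Underlies {V : Type u₁} [Category.{v₁} V] [MonoidalCategory V]
    {C : Type u₂} [Category.{v₂} C] {a : LeftAction V C} {T : Monad C}
    (S : StrongMonadStr a T) : Prop :=
  (∀ {X Y : C} (f : X ⟶ Y),
    T.map f = (a.lam (T.obj X)).inv ≫ S.ext ((a.lam X).hom ≫ f ≫ T.η.app Y)) ∧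
  (∀ X : C,
    T.μ.app X = (a.lam (T.obj (T.obj X))).inv ≫ S.ext ((a.lam (T.obj X)).hom))

/-- A strength for the functor of the monad `T` makes `η` and `μ` strong
natural transformations. -/
def StrengthCompat {V : Type u₁} [Category.{v₁} V] [MonoidalCategory V]
    {C : Type u₂} [Category.{v₂} C] (a : LeftAction V C) (T : Monad C)
    (s : Strength a a (T : C ⥤ C)) : Prop :=
  (∀ (Γ : V) (X : C),
    a.actMap Γ (T.η.app X) ≫ s.str Γ X = T.η.app (a.act Γ X)) ∧
  (∀ (Γ : V) (X : C),
    a.actMap Γ (T.μ.app X) ≫ s.str Γ X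
      = s.str Γ (T.obj X) ≫ T.map (s.str Γ X) ≫ T.μ.app (a.act Γ X))
namespace Statement10Aux

variable {V : Type u₁} [Category.{v₁} V] [MonoidalCategory V]
variable {C : Type u₂} [Category.{v₂} C]
variable (a : LeftAction V C) (T : Monad C)

lemma actMap_unit_eq {X Y : C} (f : X ⟶ Y) :
    (a.F.obj (𝟙_ V)).map f = (a.lam X).hom ≫ f ≫ (a.lam Y).inv := by
  rw [← Category.assoc, ← a.lam_natural f, Category.assoc, Iso.hom_inv_id, Category.comp_id]

lemma actHom_comp {Γ Δ Θ : V} (u : Γ ⟶ Δ) (v : Δ ⟶ Θ) (X : C) :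
    (a.F.map u).app X ≫ (a.F.map v).app X = (a.F.map (u ≫ v)).app X := by
  rw [← NatTrans.comp_app, ← Functor.map_comp]

lemma assoc_unit_hom (Γ : V) (X : C) :
    (a.assoc (𝟙_ V) Γ X).hom = (a.F.map (λ_ Γ).hom).app X ≫ (a.lam ((a.F.obj Γ).obj X)).inv := by
  rw [Iso.eq_comp_inv]
  exact a.unit_assoc Γ X

lemma assoc_counit_hom (Γ : V) (X : C) {W : C} (w : (a.F.obj Γ).obj X ⟶ W) :
    (a.assoc Γ (𝟙_ V) X).hom ≫ (a.F.obj Γ).map (a.lam X).hom ≫ w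
      = (a.F.map (ρ_ Γ).hom).app X ≫ w := by
  have h := a.triangle Γ X
  calc (a.assoc Γ (𝟙_ V) X).hom ≫ (a.F.obj Γ).map (a.lam X).hom ≫ w
      = (a.F.map (ρ_ Γ).hom).app X ≫ ((a.F.map (ρ_ Γ).inv).app X
          ≫ (a.assoc Γ (𝟙_ V) X).hom ≫ (a.F.obj Γ).map (a.lam X).hom) ≫ w := by
        rw [← Category.assoc, ← Category.assoc, ← Category.assoc, actHom_comp,
          Iso.hom_inv_id]
        simp
    _ = (a.F.map (ρ_ Γ).hom).app X ≫ w := by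
        rw [← Category.assoc, h]
        simp

variable (S : StrongMonadStr a T)

/-- Kleisli extension in trivial context. -/
def bindS {X Y : C} (h : X ⟶ T.obj Y) : T.obj X ⟶ T.obj Y :=
  (a.lam (T.obj X)).inv ≫ S.ext ((a.lam X).hom ≫ h)

lemma unit_bindS {X Y : C} (h : X ⟶ T.obj Y) : T.η.app X ≫ bindS a T S h = h := by
  have h1 := S.law_ext_unit (Γ := 𝟙_ V) ((a.lam X).hom ≫ h)
  rw [show a.actMap (𝟙_ V) (T.η.app X) = (a.F.obj (𝟙_ V)).map (T.η.app X) from rfl,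
    actMap_unit_eq] at h1
  rw [bindS, ← cancel_epi (a.lam X).hom]
  simpa [Category.assoc] using h1

lemma ext_bindS {Γ : V} {X Y Z : C} (f : a.act Γ X ⟶ T.obj Y) (h : Y ⟶ T.obj Z) :
    S.ext f ≫ bindS a T S h = S.ext (f ≫ bindS a T S h) := by
  have h1 := S.law_assoc (Γ' := 𝟙_ V) f ((a.lam Y).hom ≫ h)
  rw [show a.actMap (𝟙_ V) (S.ext f) = (a.F.obj (𝟙_ V)).map (S.ext f) from rfl,
    show a.actMap (𝟙_ V) f = (a.F.obj (𝟙_ V)).map f from rfl,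
    actMap_unit_eq, actMap_unit_eq, assoc_unit_hom, assoc_unit_hom] at h1
  simp only [Category.assoc, Iso.inv_hom_id_assoc] at h1
  rw [S.natural] at h1
  rw [bindS, ← cancel_epi ((a.F.map (λ_ Γ).hom).app (T.obj X))]
  simpa [Category.assoc, bindS] using h1

lemma actMap_bindS {Γ : V} {X Y Z : C} (h : X ⟶ T.obj Y) (g : a.act Γ Y ⟶ T.obj Z) :
    (a.F.obj Γ).map (bindS a T S h) ≫ S.ext g = S.ext ((a.F.obj Γ).map h ≫ S.ext g) := by
  have h1 := S.law_assoc (Γ := 𝟙_ V) (Γ' := Γ) ((a.lam X).hom ≫ h) g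
  have h2 : S.ext ((a.lam X).hom ≫ h) = (a.lam (T.obj X)).hom ≫ bindS a T S h := by
    simp [bindS]
  rw [h2] at h1
  simp only [Functor.map_comp, Category.assoc] at h1
  rw [assoc_counit_hom, assoc_counit_hom] at h1
  rw [S.natural] at h1
  exact (cancel_epi ((a.F.map (ρ_ Γ).hom).app (T.obj X))).mp h1






lemma map_eq_bindS (hU : S.Underlies) {X Y : C} (g : X ⟶ Y) :
    T.map g = bindS a T S (g ≫ T.η.app Y) :=
  hU.1 g

lemma mu_eq_bindS (hU : S.Underlies) (X : C) : T.μ.app X = bindS a T S (𝟙 (T.obj X)) := by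
  rw [hU.2 X, bindS, Category.comp_id]

lemma ext_map (hU : S.Underlies) {Γ : V} {X Y Z : C} (f : a.act Γ X ⟶ T.obj Y) (g : Y ⟶ Z) :
    S.ext f ≫ T.map g = S.ext (f ≫ T.map g) := by
  rw [map_eq_bindS a T S hU g]
  exact ext_bindS a T S f (g ≫ T.η.app Z)

lemma ext_mu (hU : S.Underlies) {Γ : V} {X Y : C} (f : a.act Γ X ⟶ T.obj (T.obj Y)) :
    S.ext f ≫ T.μ.app Y = S.ext (f ≫ T.μ.app Y) := by
  rw [mu_eq_bindS a T S hU Y]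
  exact ext_bindS a T S f (𝟙 (T.obj Y))

lemma ext_eta (hU : S.Underlies) {Γ : V} {X Y : C} (f : a.act Γ X ⟶ T.obj Y) :
    S.ext f = S.ext (T.η.app (a.act Γ X)) ≫ T.map f ≫ T.μ.app Y := by
  have h1 : T.map f ≫ T.μ.app Y = bindS a T S f := by
    rw [map_eq_bindS a T S hU f, mu_eq_bindS a T S hU Y, bindS]
    simp only [Category.assoc]
    rw [ext_bindS]
    simp only [Category.assoc]
    rw [unit_bindS, Category.comp_id, bindS]
  rw [show T.map f ≫ T.μ.app Y = bindS a T S f from h1, ext_bindS, unit_bindS]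

/-- The strength induced by a strong monad structure. -/
def fwd (hU : S.Underlies) : Strength a a (T : C ⥤ C) where
  str Γ X := S.ext (T.η.app (a.act Γ X))
  natural_fst := by
    intro Γ Δ u X
    rw [← S.natural u (T.η.app _)]
    have h1 : a.actHom u X ≫ T.η.app (a.act Δ X)
        = T.η.app (a.act Γ X) ≫ T.map (a.actHom u X) := by
      simpa using T.η.naturality (a.actHom u X)
    rw [h1, ← ext_map a T S hU]
  natural_snd := by
    intro Γ X Y f
    rw [show (T : C ⥤ C).map f = T.map f from rfl, map_eq_bindS a T S hU f,
      actMap_bindS a T S]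
    rw [Functor.map_comp, Category.assoc, S.law_ext_unit (T.η.app (a.act Γ Y))]
    have h1 : (a.F.obj Γ).map f ≫ T.η.app (a.act Γ Y)
        = T.η.app (a.act Γ X) ≫ T.map ((a.F.obj Γ).map f) := by
      simpa using T.η.naturality ((a.F.obj Γ).map f)
    rw [h1, ← ext_map a T S hU]
  str_unit := by
    intro X
    rw [ext_map a T S hU]
    have h1 : T.η.app (a.act (𝟙_ V) X) ≫ T.map (a.lam X).hom
        = (a.lam X).hom ≫ T.η.app X := by
      simpa using (T.η.naturality (a.lam X).hom).symm
    rw [h1, S.law_unit]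
  str_assoc := by
    intro Γ' Γ X
    rw [S.law_assoc (T.η.app (a.act Γ X)) (T.η.app (a.act Γ' (a.act Γ X)))]
    rw [show a.actMap Γ' (T.η.app (a.act Γ X)) = (a.F.obj Γ').map (T.η.app (a.act Γ X))
      from rfl] at *
    rw [show (a.assoc Γ' Γ X).hom ≫ (a.F.obj Γ').map (T.η.app (a.act Γ X))
          ≫ S.ext (T.η.app (a.act Γ' (a.act Γ X)))
        = (a.assoc Γ' Γ X).hom ≫ T.η.app (a.act Γ' (a.act Γ X)) from by
      rw [S.law_ext_unit]]
    have h1 : (a.assoc Γ' Γ X).hom ≫ T.η.app (a.act Γ' (a.act Γ X))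
        = T.η.app (a.act (Γ' ⊗ Γ) X) ≫ T.map (a.assoc Γ' Γ X).hom := by
      simpa using T.η.naturality (a.assoc Γ' Γ X).hom
    rw [h1, ← ext_map a T S hU]

lemma fwd_compat (hU : S.Underlies) : StrengthCompat a T (fwd a T S hU) := by
  constructor
  · intro Γ X
    exact S.law_ext_unit (T.η.app (a.act Γ X))
  · intro Γ X
    show (a.F.obj Γ).map (T.μ.app X) ≫ S.ext (T.η.app (a.act Γ X)) = _
    rw [mu_eq_bindS a T S hU X, actMap_bindS a T S]
    simp only [CategoryTheory.Functor.map_id, Category.id_comp]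
    exact ext_eta a T S hU (S.ext (T.η.app (a.act Γ X)))


/-- The strong monad structure induced by a compatible strength. -/
def bwd (s : Strength a a (T : C ⥤ C)) (hc : StrengthCompat a T s) :
    StrongMonadStr a T where
  ext {Γ X Y} f := s.str Γ X ≫ T.map f ≫ T.μ.app Y
  natural := by
    intro Γ Δ u X Y f
    simp only [Functor.map_comp, Category.assoc]
    rw [← Category.assoc, ← s.natural_fst u X, Category.assoc]
  law_unit := by
    intro X
    simp only [Functor.map_comp, Category.assoc, Monad.right_unit, Functor.id_obj,
      Category.comp_id]
    exact s.str_unit X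
  law_ext_unit := by
    intro Γ X Y f
    rw [← Category.assoc, hc.1 Γ X]
    have h1 : T.η.app (a.act Γ X) ≫ T.map f = f ≫ T.η.app (T.obj Y) := by
      simpa using (T.η.naturality f).symm
    rw [← Category.assoc, h1, Category.assoc, Monad.left_unit]
    simp
  law_assoc := by
    intro Γ' Γ X Y Z f g
    simp only [Functor.map_comp, Category.assoc]
    rw [reassoc_of% hc.2 Γ' Y]
    rw [reassoc_of% s.natural_snd Γ' f]
    have hμn : T.μ.app (a.act Γ' Y) ≫ T.map g
        = T.map (T.map g) ≫ T.μ.app (T.obj Z) := by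
      simpa using (T.μ.naturality g).symm
    rw [reassoc_of% hμn]
    have hassoc : T.μ.app (T.obj Z) ≫ T.μ.app Z = T.map (T.μ.app Z) ≫ T.μ.app Z :=
      (T.assoc Z).symm
    rw [hassoc]
    rw [reassoc_of% s.str_assoc Γ' Γ X]

lemma bwd_underlies (s : Strength a a (T : C ⥤ C)) (hc : StrengthCompat a T s) :
    (bwd a T s hc).Underlies := by
  constructor
  · intro X Y f
    show T.map f = (a.lam (T.obj X)).inv ≫ s.str (𝟙_ V) X
      ≫ T.map ((a.lam X).hom ≫ f ≫ T.η.app Y) ≫ T.μ.app Y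
    simp only [Functor.map_comp, Category.assoc, Monad.right_unit, Functor.id_obj,
      Category.comp_id]
    rw [reassoc_of% s.str_unit X, Iso.inv_hom_id_assoc]
  · intro X
    show T.μ.app X = (a.lam (T.obj (T.obj X))).inv ≫ s.str (𝟙_ V) (T.obj X)
      ≫ T.map (a.lam (T.obj X)).hom ≫ T.μ.app X
    rw [reassoc_of% s.str_unit (T.obj X), Iso.inv_hom_id_assoc]

lemma sms_ext' {S₁ S₂ : StrongMonadStr a T}
    (h : ∀ {Γ : V} {X Y : C} (f : a.act Γ X ⟶ T.obj Y), S₁.ext f = S₂.ext f) :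
    S₁ = S₂ := by
  cases S₁; cases S₂
  simp only [StrongMonadStr.mk.injEq]
  funext Γ X Y f
  exact h f

lemma strength_ext' {F : C ⥤ C} {s₁ s₂ : Strength a a F}
    (h : ∀ (Γ : V) (X : C), s₁.str Γ X = s₂.str Γ X) : s₁ = s₂ := by
  cases s₁; cases s₂
  simp only [Strength.mk.injEq]
  funext Γ X
  exact h Γ X

end Statement10Aux
/-- for a monad `T` on `C` with a left action of `V` on `C`,
strong monad structures on `T` (Kleisli-extension presentations whose
underlying ordinary monad is `T`) are in bijection with strengths for the
functor of `T` making `η` and `μ` strong natural transformations; the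
bijection is the canonical one, `str_{Γ,X} = (η_{Γ▷X})♯`. -/
theorem statement10 {V : Type u₁} [Category.{v₁} V] [MonoidalCategory V]
    {C : Type u₂} [Category.{v₂} C] (a : LeftAction V C) (T : Monad C) :
    ∃ e : {S : StrongMonadStr a T // S.Underlies}
          ≃ {s : Strength a a (T : C ⥤ C) // StrengthCompat a T s},
      ∀ (S : {S : StrongMonadStr a T // S.Underlies}) (Γ : V) (X : C),
        (e S).1.str Γ X = S.1.ext (T.η.app (a.act Γ X)) := by
  refine ⟨⟨fun S => ⟨Statement10Aux.fwd a T S.1 S.2, Statement10Aux.fwd_compat a T S.1 S.2⟩,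
      fun s => ⟨Statement10Aux.bwd a T s.1 s.2, Statement10Aux.bwd_underlies a T s.1 s.2⟩,
      ?_, ?_⟩, fun S Γ X => rfl⟩
  · intro S
    apply Subtype.ext
    apply Statement10Aux.sms_ext' a T
    intro Γ X Y f
    exact (Statement10Aux.ext_eta a T S.1 S.2 f).symm
  · intro s
    apply Subtype.ext
    apply Statement10Aux.strength_ext' a
    intro Γ X
    show s.1.str Γ X ≫ T.map (T.η.app (a.act Γ X)) ≫ T.μ.app (a.act Γ X) = s.1.str Γ X
    rw [Monad.right_unit]
    simp
end

section
/- Let F be a strong endofunctor on C (with respect to an action ▷ of V on C). If for every object X the strongly free F-algebra (TX, η_X : X → TX, σ_X : F(TX) → TX) exists, then T carries a strong monad structure whose unit is η and whose Kleisli extension g♯ of g : Γ ▷ X → TY is the unique h : Γ ▷ TX → TY satisfying h ∘ (Γ ▷ η_X) = g and h ∘ (Γ ▷ σ_X) = σ_Y ∘ F⟨Γ⟩h. Moreover the underlying ordinary monad is the algebraically free monad on the underlying functor of F. -/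
open CategoryTheory MonoidalCategory

universe v₁ v₂ v₃ u₁ u₂ u₃

section Statement13Aux

variable {V : Type u₁} [Category.{v₁} V] [MonoidalCategory V]
    {C : Type u₂} [Category.{v₂} C] {a : LeftAction V C}
    {F₀ : C ⥤ C} {s : Strength a a F₀}
    {T₀ : C → C} {η₀ : ∀ X : C, X ⟶ T₀ X} {σ : ∀ X : C, F₀.obj (T₀ X) ⟶ T₀ X}

theorem act_nat13 {Γ Δ : V} (u : Γ ⟶ Δ) {X Y : C} (f : X ⟶ Y) :
    a.actMap Γ f ≫ a.actHom u Y = a.actHom u X ≫ a.actMap Δ f :=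
  (a.F.map u).naturality f

theorem lam_inv_nat13 {X Y : C} (f : X ⟶ Y) :
    f ≫ (a.lam Y).inv = (a.lam X).inv ≫ a.actMap (𝟙_ V) f := by
  rw [Iso.comp_inv_eq, Category.assoc, a.lam_natural, Iso.inv_hom_id_assoc]

theorem assoc_nat13 (Γ' Γ : V) {X Y : C} (f : X ⟶ Y) :
    a.actMap (Γ' ⊗ Γ) f ≫ (a.assoc Γ' Γ Y).hom
      = (a.assoc Γ' Γ X).hom ≫ a.actMap Γ' (a.actMap Γ f) := by
  simpa using a.assoc_natural (𝟙 Γ') (𝟙 Γ) f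

theorem str_unit13 (X : C) :
    s.str (𝟙_ V) X = (a.lam (F₀.obj X)).hom ≫ F₀.map (a.lam X).inv := by
  rw [← s.str_unit X, Category.assoc, ← F₀.map_comp, Iso.hom_inv_id, F₀.map_id,
    Category.comp_id]

variable (hfree : ∀ (X : C) (Γ : V) (B : C) (b : F₀.obj B ⟶ B) (g : a.act Γ X ⟶ B),
      ∃! h : a.act Γ (T₀ X) ⟶ B,
        a.actMap Γ (η₀ X) ≫ h = g ∧
        a.actMap Γ (σ X) ≫ h = (s.str Γ (T₀ X) ≫ F₀.map h) ≫ b)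

/-- The Kleisli extension. -/
noncomputable def ext13 (Γ : V) (X Y : C) (g : a.act Γ X ⟶ T₀ Y) :
    a.act Γ (T₀ X) ⟶ T₀ Y :=
  (hfree X Γ (T₀ Y) (σ Y) g).choose

theorem ext13_η (Γ : V) (X Y : C) (g : a.act Γ X ⟶ T₀ Y) :
    a.actMap Γ (η₀ X) ≫ ext13 hfree Γ X Y g = g :=
  (hfree X Γ (T₀ Y) (σ Y) g).choose_spec.1.1

theorem ext13_σ (Γ : V) (X Y : C) (g : a.act Γ X ⟶ T₀ Y) :
    a.actMap Γ (σ X) ≫ ext13 hfree Γ X Y g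
      = (s.str Γ (T₀ X) ≫ F₀.map (ext13 hfree Γ X Y g)) ≫ σ Y :=
  (hfree X Γ (T₀ Y) (σ Y) g).choose_spec.1.2

theorem ext13_unique {Γ : V} {X Y : C} {g : a.act Γ X ⟶ T₀ Y}
    {h : a.act Γ (T₀ X) ⟶ T₀ Y}
    (h1 : a.actMap Γ (η₀ X) ≫ h = g)
    (h2 : a.actMap Γ (σ X) ≫ h = (s.str Γ (T₀ X) ≫ F₀.map h) ≫ σ Y) :
    h = ext13 hfree Γ X Y g :=
  (hfree X Γ (T₀ Y) (σ Y) g).choose_spec.2 h ⟨h1, h2⟩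

theorem ext13_natural {Γ Δ : V} (u : Γ ⟶ Δ) (X Y : C) (f : a.act Δ X ⟶ T₀ Y) :
    ext13 hfree Γ X Y (a.actHom u X ≫ f)
      = a.actHom u (T₀ X) ≫ ext13 hfree Δ X Y f := by
  refine (ext13_unique hfree ?_ ?_).symm
  · rw [← Category.assoc, act_nat13, Category.assoc, ext13_η]
  · rw [← Category.assoc, act_nat13, Category.assoc, ext13_σ]
    simp only [Functor.map_comp, Category.assoc]
    slice_lhs 1 2 => rw [s.natural_fst]
    simp only [Category.assoc]

theorem ext13_lam (X : C) :
    ext13 hfree (𝟙_ V) X X ((a.lam X).hom ≫ η₀ X) = (a.lam (T₀ X)).hom := by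
  refine (ext13_unique hfree ?_ ?_).symm
  · exact a.lam_natural (η₀ X)
  · rw [a.lam_natural (σ X), s.str_unit (T₀ X)]

theorem ext13_comp (Γ' Γ : V) (X Y Z : C)
    (f : a.act Γ X ⟶ T₀ Y) (g : a.act Γ' Y ⟶ T₀ Z) :
    (a.assoc Γ' Γ (T₀ X)).hom ≫ a.actMap Γ' (ext13 hfree Γ X Y f) ≫ ext13 hfree Γ' Y Z g
      = ext13 hfree (Γ' ⊗ Γ) X Z
          ((a.assoc Γ' Γ X).hom ≫ a.actMap Γ' f ≫ ext13 hfree Γ' Y Z g) := by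
  refine ext13_unique hfree ?_ ?_
  · rw [← Category.assoc, assoc_nat13, Category.assoc, ← Functor.map_comp_assoc,
      ext13_η]
  · rw [← Category.assoc, assoc_nat13, Category.assoc, ← Functor.map_comp_assoc,
      ext13_σ]
    simp only [Functor.map_comp, Category.assoc]
    rw [ext13_σ hfree Γ' Y Z g]
    simp only [Category.assoc]
    slice_lhs 3 4 => rw [s.natural_snd]
    slice_lhs 1 3 => rw [s.str_assoc]
    simp only [Functor.map_comp, Category.assoc]

/-- Unparametrized fold of the free algebra. -/
noncomputable def fold13 {X B : C} (b : F₀.obj B ⟶ B) (g : X ⟶ B) : T₀ X ⟶ B :=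
  (a.lam (T₀ X)).inv ≫ (hfree X (𝟙_ V) B b ((a.lam X).hom ≫ g)).choose

theorem fold13_free (X Y : C) (g : X ⟶ T₀ Y) :
    fold13 hfree (σ Y) g
      = (a.lam (T₀ X)).inv ≫ ext13 hfree (𝟙_ V) X Y ((a.lam X).hom ≫ g) := rfl

theorem fold13_η {X B : C} (b : F₀.obj B ⟶ B) (g : X ⟶ B) :
    η₀ X ≫ fold13 hfree b g = g := by
  have h1 := (hfree X (𝟙_ V) B b ((a.lam X).hom ≫ g)).choose_spec.1.1
  show η₀ X ≫ (a.lam (T₀ X)).inv ≫ _ = g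
  rw [← Category.assoc, lam_inv_nat13, Category.assoc, h1, Iso.inv_hom_id_assoc]

theorem conj13 {X B : C} (b : F₀.obj B ⟶ B) (k : a.act (𝟙_ V) (T₀ X) ⟶ B)
    (h2 : a.actMap (𝟙_ V) (σ X) ≫ k = (s.str (𝟙_ V) (T₀ X) ≫ F₀.map k) ≫ b) :
    σ X ≫ (a.lam (T₀ X)).inv ≫ k = F₀.map ((a.lam (T₀ X)).inv ≫ k) ≫ b := by
  rw [← Category.assoc, lam_inv_nat13, Category.assoc, h2, str_unit13]
  simp only [Functor.map_comp, Category.assoc, Iso.inv_hom_id_assoc]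

theorem fold13_σ {X B : C} (b : F₀.obj B ⟶ B) (g : X ⟶ B) :
    σ X ≫ fold13 hfree b g = F₀.map (fold13 hfree b g) ≫ b :=
  conj13 b _ (hfree X (𝟙_ V) B b ((a.lam X).hom ≫ g)).choose_spec.1.2

theorem fold13_σ_assoc {X B : C} (b : F₀.obj B ⟶ B) (g : X ⟶ B)
    {W : C} (w : B ⟶ W) :
    σ X ≫ fold13 hfree b g ≫ w = F₀.map (fold13 hfree b g) ≫ b ≫ w := by
  rw [← Category.assoc, fold13_σ, Category.assoc]

theorem fold13_unique {X B : C} {b : F₀.obj B ⟶ B} {g : X ⟶ B}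
    (h : T₀ X ⟶ B) (h1 : η₀ X ≫ h = g) (h2 : σ X ≫ h = F₀.map h ≫ b) :
    h = fold13 hfree b g := by
  have key : (a.lam (T₀ X)).hom ≫ h
      = (hfree X (𝟙_ V) B b ((a.lam X).hom ≫ g)).choose := by
    refine (hfree X (𝟙_ V) B b ((a.lam X).hom ≫ g)).choose_spec.2 _ ⟨?_, ?_⟩
    · rw [← Category.assoc, a.lam_natural, Category.assoc, h1]
    · rw [← Category.assoc, a.lam_natural, Category.assoc, h2, str_unit13]
      simp only [Functor.map_comp, Category.assoc]
      rw [← Functor.map_comp_assoc, Iso.inv_hom_id, F₀.map_id, Category.id_comp]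
  show h = (a.lam (T₀ X)).inv ≫ _
  rw [← key, Iso.inv_hom_id_assoc]

theorem fold13_comp {X B B' : C} {b : F₀.obj B ⟶ B} {b' : F₀.obj B' ⟶ B'}
    {g : X ⟶ B} (k : B ⟶ B') (hk : b ≫ k = F₀.map k ≫ b') :
    fold13 hfree b g ≫ k = fold13 hfree b' (g ≫ k) := by
  refine fold13_unique hfree _ ?_ ?_
  · rw [← Category.assoc, fold13_η]
  · rw [← Category.assoc, fold13_σ, Category.assoc, hk, ← Functor.map_comp_assoc]

theorem fold13_id (X : C) : fold13 hfree (σ X) (η₀ X) = 𝟙 (T₀ X) :=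
  (fold13_unique hfree (𝟙 _) (by simp) (by simp)).symm

/-- The underlying functor of the induced monad. -/
noncomputable def Tfun13 : C ⥤ C where
  obj := T₀
  map {X Y} f := fold13 hfree (σ Y) (f ≫ η₀ Y)
  map_id X := by
    show fold13 hfree (σ X) (𝟙 X ≫ η₀ X) = 𝟙 (T₀ X)
    rw [Category.id_comp, fold13_id]
  map_comp {X Y Z} f g := by
    show fold13 hfree (σ Z) ((f ≫ g) ≫ η₀ Z)
        = fold13 hfree (σ Y) (f ≫ η₀ Y) ≫ fold13 hfree (σ Z) (g ≫ η₀ Z)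
    rw [fold13_comp hfree _ (fold13_σ hfree (σ Z) (g ≫ η₀ Z))]
    simp only [Category.assoc]
    rw [fold13_η]

/-- The induced monad. -/
noncomputable def Tmon13 : Monad C where
  toFunctor := Tfun13 hfree
  η :=
    { app := fun X => η₀ X
      naturality := fun X Y f => by
        show f ≫ η₀ Y = η₀ X ≫ fold13 hfree (σ Y) (f ≫ η₀ Y)
        rw [fold13_η] }
  μ :=
    { app := fun X => fold13 hfree (σ X) (𝟙 (T₀ X))
      naturality := fun X Y f => by
        show fold13 hfree (σ (T₀ Y)) (fold13 hfree (σ Y) (f ≫ η₀ Y) ≫ η₀ (T₀ Y))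
              ≫ fold13 hfree (σ Y) (𝟙 (T₀ Y))
            = fold13 hfree (σ X) (𝟙 (T₀ X)) ≫ fold13 hfree (σ Y) (f ≫ η₀ Y)
        rw [fold13_comp hfree _ (fold13_σ hfree (σ Y) (𝟙 (T₀ Y))),
          fold13_comp hfree _ (fold13_σ hfree (σ Y) (f ≫ η₀ Y))]
        simp only [Category.assoc]
        rw [fold13_η, Category.comp_id, Category.id_comp] }
  assoc X := by
    show fold13 hfree (σ (T₀ X)) (fold13 hfree (σ X) (𝟙 (T₀ X)) ≫ η₀ (T₀ X))
          ≫ fold13 hfree (σ X) (𝟙 (T₀ X))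
        = fold13 hfree (σ (T₀ X)) (𝟙 (T₀ (T₀ X))) ≫ fold13 hfree (σ X) (𝟙 (T₀ X))
    rw [fold13_comp hfree _ (fold13_σ hfree (σ X) (𝟙 (T₀ X)))]
    conv_rhs => rw [fold13_comp hfree _ (fold13_σ hfree (σ X) (𝟙 (T₀ X)))]
    simp only [Category.assoc]
    rw [fold13_η, Category.comp_id, Category.id_comp]
  left_unit X := fold13_η hfree (σ X) (𝟙 (T₀ X))
  right_unit X := by
    show fold13 hfree (σ (T₀ X)) (η₀ X ≫ η₀ (T₀ X)) ≫ fold13 hfree (σ X) (𝟙 (T₀ X))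
        = 𝟙 (T₀ X)
    rw [fold13_comp hfree _ (fold13_σ hfree (σ X) (𝟙 (T₀ X)))]
    simp only [Category.assoc]
    rw [fold13_η, Category.comp_id, fold13_id]

/-- Comparison from Eilenberg–Moore algebras to `F₀`-algebras. -/
noncomputable def Phi13 : (Tmon13 hfree).Algebra ⥤ Endofunctor.Algebra F₀ where
  obj A :=
    { a := A.A
      str := F₀.map (η₀ A.A) ≫ σ A.A ≫ A.a }
  map {A B} f :=
    { f := f.f
      h := by
        have hh : fold13 hfree (σ B.A) (f.f ≫ η₀ B.A) ≫ B.a = A.a ≫ f.f := f.h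
        calc F₀.map f.f ≫ F₀.map (η₀ B.A) ≫ σ B.A ≫ B.a
            = F₀.map (f.f ≫ η₀ B.A) ≫ σ B.A ≫ B.a := by
              rw [← Functor.map_comp_assoc]
          _ = F₀.map (η₀ A.A ≫ fold13 hfree (σ B.A) (f.f ≫ η₀ B.A)) ≫ σ B.A ≫ B.a := by
              rw [fold13_η]
          _ = F₀.map (η₀ A.A) ≫ σ A.A ≫ fold13 hfree (σ B.A) (f.f ≫ η₀ B.A) ≫ B.a := by
              rw [Functor.map_comp, Category.assoc]
              exact congrArg (F₀.map (η₀ A.A) ≫ ·)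
                (fold13_σ_assoc hfree (σ B.A) (f.f ≫ η₀ B.A) B.a).symm
          _ = F₀.map (η₀ A.A) ≫ σ A.A ≫ A.a ≫ f.f := by rw [hh]; rfl
          _ = (F₀.map (η₀ A.A) ≫ σ A.A ≫ A.a) ≫ f.f := by
              simp only [Category.assoc]
              exact congrArg (F₀.map (η₀ A.A) ≫ ·) (Category.assoc (σ A.A) A.a f.f).symm }
  map_id A := rfl
  map_comp f g := rfl

/-- Comparison from `F₀`-algebras to Eilenberg–Moore algebras. -/
noncomputable def Psi13 : Endofunctor.Algebra F₀ ⥤ (Tmon13 hfree).Algebra where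
  obj B :=
    { A := B.a
      a := fold13 hfree B.str (𝟙 B.a)
      unit := fold13_η hfree B.str (𝟙 B.a)
      assoc := by
        show fold13 hfree (σ B.a) (𝟙 (T₀ B.a)) ≫ fold13 hfree B.str (𝟙 B.a)
            = fold13 hfree (σ B.a) (fold13 hfree B.str (𝟙 B.a) ≫ η₀ B.a)
                ≫ fold13 hfree B.str (𝟙 B.a)
        rw [fold13_comp hfree _ (fold13_σ hfree B.str (𝟙 B.a))]
        conv_rhs => rw [fold13_comp hfree _ (fold13_σ hfree B.str (𝟙 B.a))]
        simp only [Category.assoc]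
        rw [fold13_η, Category.comp_id, Category.id_comp] }
  map {B B'} f :=
    { f := f.f
      h := by
        show fold13 hfree (σ B'.a) (f.f ≫ η₀ B'.a) ≫ fold13 hfree B'.str (𝟙 B'.a)
            = fold13 hfree B.str (𝟙 B.a) ≫ f.f
        rw [fold13_comp hfree _ (fold13_σ hfree B'.str (𝟙 B'.a)),
          fold13_comp hfree f.f f.h.symm]
        simp only [Category.assoc]
        rw [fold13_η, Category.comp_id, Category.id_comp] }
  map_id B := rfl
  map_comp f g := rfl

theorem malg_eq13 {T : Monad C} {X : C} {f g : T.obj X ⟶ X}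
    {u1 : T.η.app X ≫ f = 𝟙 X} {s1 : T.μ.app X ≫ f = (T : C ⥤ C).map f ≫ f}
    {u2 : T.η.app X ≫ g = 𝟙 X} {s2 : T.μ.app X ≫ g = (T : C ⥤ C).map g ≫ g}
    (h : f = g) :
    (⟨X, f, u1, s1⟩ : T.Algebra) = ⟨X, g, u2, s2⟩ := by subst h; rfl

theorem falg_eq13 {F : C ⥤ C} {X : C} {f g : F.obj X ⟶ X} (h : f = g) :
    (⟨X, f⟩ : Endofunctor.Algebra F) = ⟨X, g⟩ := by subst h; rfl

theorem malg_eqToHom_f13 {T : Monad C} {A B : T.Algebra} (h : A = B) :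
    (Monad.Algebra.Hom.f (eqToHom h)) = eqToHom (congrArg Monad.Algebra.A h) := by
  subst h; rfl

theorem falg_eqToHom_f13 {F : C ⥤ C} {A B : Endofunctor.Algebra F} (h : A = B) :
    (Endofunctor.Algebra.Hom.f (eqToHom h))
      = eqToHom (congrArg Endofunctor.Algebra.a h) := by
  subst h; rfl

theorem phi_psi13 : Phi13 hfree ⋙ Psi13 hfree = 𝟭 _ := by
  refine CategoryTheory.Functor.ext (fun A => ?_) (fun A B f => ?_)
  · cases A with
    | mk AA Aa hu ha =>
      refine malg_eq13 ?_
      refine (fold13_unique hfree Aa hu ?_).symm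
      obtain ⟨Aa, rfl⟩ : ∃ Ab : T₀ AA ⟶ AA, Ab = Aa := ⟨Aa, rfl⟩
      have hassoc : fold13 hfree (σ AA) (𝟙 (T₀ AA)) ≫ Aa
          = fold13 hfree (σ AA) (Aa ≫ η₀ AA) ≫ Aa := ha
      symm
      calc F₀.map Aa ≫ F₀.map (η₀ AA) ≫ σ AA ≫ Aa
          = F₀.map (Aa ≫ η₀ AA) ≫ σ AA ≫ Aa := by rw [← Functor.map_comp_assoc]
        _ = F₀.map (η₀ (T₀ AA) ≫ fold13 hfree (σ AA) (Aa ≫ η₀ AA)) ≫ σ AA ≫ Aa := by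
            rw [fold13_η]
        _ = F₀.map (η₀ (T₀ AA)) ≫ σ (T₀ AA)
              ≫ fold13 hfree (σ AA) (Aa ≫ η₀ AA) ≫ Aa := by
            rw [Functor.map_comp, Category.assoc, fold13_σ_assoc]
        _ = F₀.map (η₀ (T₀ AA)) ≫ σ (T₀ AA)
              ≫ fold13 hfree (σ AA) (𝟙 (T₀ AA)) ≫ Aa := by rw [← hassoc]
        _ = F₀.map (η₀ (T₀ AA)) ≫ F₀.map (fold13 hfree (σ AA) (𝟙 (T₀ AA)))
              ≫ σ AA ≫ Aa := by rw [fold13_σ_assoc]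
        _ = F₀.map (η₀ (T₀ AA) ≫ fold13 hfree (σ AA) (𝟙 (T₀ AA))) ≫ σ AA ≫ Aa := by
            rw [Functor.map_comp_assoc]
        _ = σ AA ≫ Aa := by rw [fold13_η, F₀.map_id, Category.id_comp]
  · refine Monad.Algebra.Hom.ext' _ _ _ _ ?_
    rw [Monad.Algebra.comp_f, Monad.Algebra.comp_f, malg_eqToHom_f13,
      malg_eqToHom_f13]
    show f.f = 𝟙 _ ≫ f.f ≫ 𝟙 _
    simp

theorem psi_phi13 : Psi13 hfree ⋙ Phi13 hfree = 𝟭 _ := by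
  refine CategoryTheory.Functor.ext (fun B => ?_) (fun A B f => ?_)
  · cases B with
    | mk BB bstr =>
      refine falg_eq13 ?_
      calc F₀.map (η₀ BB) ≫ σ BB ≫ fold13 hfree bstr (𝟙 BB)
          = F₀.map (η₀ BB) ≫ F₀.map (fold13 hfree bstr (𝟙 BB)) ≫ bstr := by
            rw [fold13_σ]
        _ = F₀.map (η₀ BB ≫ fold13 hfree bstr (𝟙 BB)) ≫ bstr := by
            rw [Functor.map_comp_assoc]
        _ = bstr := by rw [fold13_η, F₀.map_id, Category.id_comp]
  · refine Endofunctor.Algebra.ext ?_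
    rw [Endofunctor.Algebra.comp_f, Endofunctor.Algebra.comp_f, falg_eqToHom_f13,
      falg_eqToHom_f13]
    show f.f = 𝟙 _ ≫ f.f ≫ 𝟙 _
    simp

theorem phi_forget13 :
    Phi13 hfree ⋙ Endofunctor.Algebra.forget F₀ = (Tmon13 hfree).forget := by
  refine CategoryTheory.Functor.ext (fun A => rfl) (fun A B f => ?_)
  show f.f = 𝟙 _ ≫ f.f ≫ 𝟙 _
  simp

end Statement13Aux

/-- let `F₀` be a strong endofunctor on `C` (a functor with a
strength `s`, acting on morphisms `f : Γ ▷ X ⟶ Y` by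
`F⟨Γ⟩f = F₀.map f ∘ str`). If for every `X` the strongly free `F`-algebra
`(T₀ X, η₀ X, σ X)` exists, then `T₀` carries a strong monad structure with
unit `η₀`, whose Kleisli extension `g♯` of `g : Γ ▷ X ⟶ T₀ Y` is the unique
`h` with `h ∘ (Γ ▷ η₀) = g` and `h ∘ (Γ ▷ σ) = σ ∘ F⟨Γ⟩h`; moreover the
underlying ordinary monad is algebraically free on `F₀`. -/
theorem statement13 {V : Type u₁} [Category.{v₁} V] [MonoidalCategory V]
    {C : Type u₂} [Category.{v₂} C] (a : LeftAction V C)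
    (F₀ : C ⥤ C) (s : Strength a a F₀)
    (T₀ : C → C) (η₀ : ∀ X : C, X ⟶ T₀ X) (σ : ∀ X : C, F₀.obj (T₀ X) ⟶ T₀ X)
    (hfree : ∀ (X : C) (Γ : V) (B : C) (b : F₀.obj B ⟶ B) (g : a.act Γ X ⟶ B),
      ∃! h : a.act Γ (T₀ X) ⟶ B,
        a.actMap Γ (η₀ X) ≫ h = g ∧
        a.actMap Γ (σ X) ≫ h = (s.str Γ (T₀ X) ≫ F₀.map h) ≫ b) :
    ∃ ext : ∀ (Γ : V) (X Y : C), (a.act Γ X ⟶ T₀ Y) → (a.act Γ (T₀ X) ⟶ T₀ Y),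
      -- naturality in Γ
      (∀ {Γ Δ : V} (u : Γ ⟶ Δ) (X Y : C) (f : a.act Δ X ⟶ T₀ Y),
        ext Γ X Y (a.actHom u X ≫ f) = a.actHom u (T₀ X) ≫ ext Δ X Y f) ∧
      -- the three strong monad laws
      (∀ X : C,
        ext (𝟙_ V) X X ((a.lam X).hom ≫ η₀ X) = (a.lam (T₀ X)).hom) ∧
      (∀ (Γ : V) (X Y : C) (f : a.act Γ X ⟶ T₀ Y),
        a.actMap Γ (η₀ X) ≫ ext Γ X Y f = f) ∧
      (∀ (Γ' Γ : V) (X Y Z : C)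
          (f : a.act Γ X ⟶ T₀ Y) (g : a.act Γ' Y ⟶ T₀ Z),
        (a.assoc Γ' Γ (T₀ X)).hom ≫ a.actMap Γ' (ext Γ X Y f) ≫ ext Γ' Y Z g
          = ext (Γ' ⊗ Γ) X Z
              ((a.assoc Γ' Γ X).hom ≫ a.actMap Γ' f ≫ ext Γ' Y Z g)) ∧
      -- `ext g` is the unique morphism of the strongly free algebra property
      (∀ (Γ : V) (X Y : C) (g : a.act Γ X ⟶ T₀ Y),
        a.actMap Γ (η₀ X) ≫ ext Γ X Y g = g ∧
        a.actMap Γ (σ X) ≫ ext Γ X Y g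
          = (s.str Γ (T₀ X) ≫ F₀.map (ext Γ X Y g)) ≫ σ Y) ∧
      -- the underlying ordinary monad is algebraically free on `F₀`
      (∃ (T : Monad C) (hobj : ∀ X : C, T.obj X = T₀ X),
        (∀ X : C, T.η.app X = η₀ X ≫ eqToHom (hobj X).symm) ∧
        (∀ {X Y : C} (f : X ⟶ Y),
          T.map f = eqToHom (hobj X) ≫
            ((a.lam (T₀ X)).inv ≫
              ext (𝟙_ V) X Y ((a.lam X).hom ≫ f ≫ η₀ Y)) ≫
            eqToHom (hobj Y).symm) ∧
        (∀ X : C,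
          T.μ.app X = eqToHom ((hobj (T.obj X)).trans (congrArg T₀ (hobj X))) ≫
            ((a.lam (T₀ (T₀ X))).inv ≫
              ext (𝟙_ V) (T₀ X) X ((a.lam (T₀ X)).hom)) ≫
            eqToHom (hobj X).symm) ∧
        (∃ (Φ : T.Algebra ⥤ Endofunctor.Algebra F₀)
            (Ψ : Endofunctor.Algebra F₀ ⥤ T.Algebra),
          Φ ⋙ Ψ = 𝟭 _ ∧ Ψ ⋙ Φ = 𝟭 _ ∧
          Φ ⋙ Endofunctor.Algebra.forget F₀ = T.forget)) := by
    classical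
  refine ⟨ext13 hfree, ?_, ext13_lam hfree, ext13_η hfree, ext13_comp hfree,
    fun Γ X Y g => ⟨ext13_η hfree Γ X Y g, ext13_σ hfree Γ X Y g⟩,
    Tmon13 hfree, fun _ => rfl, ?_, ?_, ?_,
    Phi13 hfree, Psi13 hfree, phi_psi13 hfree, psi_phi13 hfree, phi_forget13 hfree⟩
  · intro Γ Δ u X Y f
    exact ext13_natural hfree u X Y f
  · intro X
    show η₀ X = η₀ X ≫ 𝟙 (T₀ X)
    simp
  · intro X Y f
    show (a.lam (T₀ X)).inv ≫ ext13 hfree (𝟙_ V) X Y ((a.lam X).hom ≫ f ≫ η₀ Y)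
        = 𝟙 (T₀ X) ≫
            ((a.lam (T₀ X)).inv ≫
              ext13 hfree (𝟙_ V) X Y ((a.lam X).hom ≫ f ≫ η₀ Y)) ≫ 𝟙 (T₀ Y)
    simp
  · intro X
    show (a.lam (T₀ (T₀ X))).inv ≫
          ext13 hfree (𝟙_ V) (T₀ X) X ((a.lam (T₀ X)).hom ≫ 𝟙 (T₀ X))
        = 𝟙 (T₀ (T₀ X)) ≫
            ((a.lam (T₀ (T₀ X))).inv ≫
              ext13 hfree (𝟙_ V) (T₀ X) X ((a.lam (T₀ X)).hom)) ≫ 𝟙 (T₀ X)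
    simp
end

section
/- Under the correspondence between actions and enrichments (assuming, for each X, an adjunction − ▷ X ⊣ X ⊸ − and a right closed structure on V), strong monads on C are in bijection with V-enriched monads on C, i.e. with data (TX, η_X : X → TX, bind_{X,Y} : (X ⊸ TY) → (TX ⊸ TY)) satisfying the three enriched monad equations; this bijection preserves the underlying ordinary monads, and a monad morphism between such monads is strong if and only if it is enriched. -/
open CategoryTheory MonoidalCategory

universe v₁ v₂ v₃ u₁ u₂ u₃

open Opposite

/-- The data making a fixed bifunctor `act : V ⥤ C ⥤ C` into a left action of
`V` on `C` (unitor, associator, and their coherence laws). -/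
structure ActionStr {V : Type u₁} [Category.{v₁} V] [MonoidalCategory V]
    {C : Type u₂} [Category.{v₂} C] (act : V ⥤ C ⥤ C) where
  lam : ∀ X : C, (act.obj (𝟙_ V)).obj X ≅ X
  lam_natural : ∀ {X Y : C} (f : X ⟶ Y),
    (act.obj (𝟙_ V)).map f ≫ (lam Y).hom = (lam X).hom ≫ f
  assoc : ∀ (Γ' Γ : V) (X : C),
    (act.obj (Γ' ⊗ Γ)).obj X ≅ (act.obj Γ').obj ((act.obj Γ).obj X)
  assoc_natural : ∀ {Γ' Δ' Γ Δ : V} (u : Γ' ⟶ Δ') (v : Γ ⟶ Δ) {X Y : C} (f : X ⟶ Y),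
    (act.map (u ⊗ₘ v)).app X ≫ (act.obj (Δ' ⊗ Δ)).map f ≫ (assoc Δ' Δ Y).hom
      = (assoc Γ' Γ X).hom ≫ (act.map u).app ((act.obj Γ).obj X)
          ≫ (act.obj Δ').map ((act.map v).app X ≫ (act.obj Δ).map f)
  triangle : ∀ (Γ : V) (X : C),
    (act.map (ρ_ Γ).inv).app X ≫ (assoc Γ (𝟙_ V) X).hom
      ≫ (act.obj Γ).map (lam X).hom = 𝟙 _
  unit_assoc : ∀ (Γ : V) (X : C),
    (assoc (𝟙_ V) Γ X).hom ≫ (lam ((act.obj Γ).obj X)).hom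
      = (act.map (λ_ Γ).hom).app X
  pentagon : ∀ (Γ₁ Γ₂ Γ₃ : V) (X : C),
    (act.map (α_ Γ₁ Γ₂ Γ₃).hom).app X ≫ (assoc Γ₁ (Γ₂ ⊗ Γ₃) X).hom
        ≫ (act.obj Γ₁).map (assoc Γ₂ Γ₃ X).hom
      = (assoc (Γ₁ ⊗ Γ₂) Γ₃ X).hom ≫ (assoc Γ₁ Γ₂ ((act.obj Γ₃).obj X)).hom

/-- Repackage an `ActionStr` as a `LeftAction`. -/
def ActionStr.toLeftAction {V : Type u₁} [Category.{v₁} V] [MonoidalCategory V]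
    {C : Type u₂} [Category.{v₂} C] {act : V ⥤ C ⥤ C} (A : ActionStr act) :
    LeftAction V C where
  F := act
  lam := A.lam
  lam_natural := A.lam_natural
  assoc := A.assoc
  assoc_natural := A.assoc_natural
  triangle := A.triangle
  unit_assoc := A.unit_assoc
  pentagon := A.pentagon

/-- An enrichment of `C` over `V` on a fixed hom-bifunctor
`hom : Cᵒᵖ ⥤ C ⥤ V`: identities `j`, composition `M`, the unit and
associativity laws, and the requirement that the underlying ordinary category
is `C` itself (the maps `f ↦ ĵ f` are bijections). -/
structure EnrichmentStr {V : Type u₁} [Category.{v₁} V] [MonoidalCategory V]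
    {C : Type u₂} [Category.{v₂} C] (hom : Cᵒᵖ ⥤ C ⥤ V) where
  j : ∀ X : C, 𝟙_ V ⟶ (hom.obj (op X)).obj X
  M : ∀ X Y Z : C,
    (hom.obj (op Y)).obj Z ⊗ (hom.obj (op X)).obj Y ⟶ (hom.obj (op X)).obj Z
  j_extranatural : ∀ {X Y : C} (f : X ⟶ Y),
    j X ≫ (hom.obj (op X)).map f = j Y ≫ (hom.map f.op).app Y
  M_natural_left : ∀ {X X' : C} (f : X' ⟶ X) (Y Z : C),
    M X Y Z ≫ (hom.map f.op).app Z
      = ((hom.obj (op Y)).obj Z ◁ (hom.map f.op).app Y) ≫ M X' Y Z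
  M_extranatural_mid : ∀ (X : C) {Y Y' : C} (g : Y ⟶ Y') (Z : C),
    ((hom.map g.op).app Z ▷ (hom.obj (op X)).obj Y) ≫ M X Y Z
      = ((hom.obj (op Y')).obj Z ◁ (hom.obj (op X)).map g) ≫ M X Y' Z
  M_natural_right : ∀ (X Y : C) {Z Z' : C} (h : Z ⟶ Z'),
    M X Y Z ≫ (hom.obj (op X)).map h
      = ((hom.obj (op Y)).map h ▷ (hom.obj (op X)).obj Y) ≫ M X Y Z'
  unit_left : ∀ X Y : C,
    (j Y ▷ (hom.obj (op X)).obj Y) ≫ M X Y Y = (λ_ ((hom.obj (op X)).obj Y)).hom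
  unit_right : ∀ X Y : C,
    ((hom.obj (op X)).obj Y ◁ j X) ≫ M X X Y = (ρ_ ((hom.obj (op X)).obj Y)).hom
  assoc : ∀ W X Y Z : C,
    (M X Y Z ▷ (hom.obj (op W)).obj X) ≫ M W X Z
      = (α_ _ _ _).hom ≫ ((hom.obj (op Y)).obj Z ◁ M W X Y) ≫ M W Y Z
  underlying_bijective : ∀ X Y : C,
    Function.Bijective (fun f : X ⟶ Y => j X ≫ (hom.obj (op X)).map f)
variable {V : Type u₁} [Category.{v₁} V] [MonoidalCategory V]
variable {C : Type u₂} [Category.{v₂} C]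

/-- The action structure `A` and the enrichment structure `E` are related via
the adjunctions `− ▷ X ⊣ X ⊸ −`. -/
def EnrRelated (act : V ⥤ C ⥤ C) (hom : Cᵒᵖ ⥤ C ⥤ V)
    (adj : ∀ X : C, act.flip.obj X ⊣ hom.obj (op X))
    (A : ActionStr act) (E : EnrichmentStr hom) : Prop :=
  (∀ X : C, E.j X = (adj X).homEquiv (𝟙_ V) X (A.lam X).hom) ∧
  (∀ X Y Z : C,
    E.M X Y Z = (adj X).homEquiv _ Z
      ((A.assoc ((hom.obj (op Y)).obj Z) ((hom.obj (op X)).obj Y) X).hom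
        ≫ (act.obj ((hom.obj (op Y)).obj Z)).map ((adj X).counit.app Y)
        ≫ (adj Y).counit.app Z))

/-- A strong monad (Kleisli-extension presentation) on given object and unit
data `(T₀, η₀)`, with respect to a left action `a` of `V` on `C`. -/
structure KleisliExt (a : LeftAction V C) (T₀ : C → C)
    (η₀ : ∀ X : C, X ⟶ T₀ X) where
  ext : ∀ {Γ : V} {X Y : C}, (a.act Γ X ⟶ T₀ Y) → (a.act Γ (T₀ X) ⟶ T₀ Y)
  natural : ∀ {Γ Δ : V} (u : Γ ⟶ Δ) {X Y : C} (f : a.act Δ X ⟶ T₀ Y),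
    ext (a.actHom u X ≫ f) = a.actHom u (T₀ X) ≫ ext f
  law_unit : ∀ X : C, ext ((a.lam X).hom ≫ η₀ X) = (a.lam (T₀ X)).hom
  law_ext_unit : ∀ {Γ : V} {X Y : C} (f : a.act Γ X ⟶ T₀ Y),
    a.actMap Γ (η₀ X) ≫ ext f = f
  law_assoc : ∀ {Γ' Γ : V} {X Y Z : C}
      (f : a.act Γ X ⟶ T₀ Y) (g : a.act Γ' Y ⟶ T₀ Z),
    (a.assoc Γ' Γ (T₀ X)).hom ≫ a.actMap Γ' (ext f) ≫ ext g
      = ext ((a.assoc Γ' Γ X).hom ≫ a.actMap Γ' f ≫ ext g)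

/-- An enriched monad (`bind` presentation) on given object and unit data
`(T₀, η₀)`, with respect to an enrichment of `C` over `V`. -/
structure EnrichedBind {hom : Cᵒᵖ ⥤ C ⥤ V} (E : EnrichmentStr hom)
    (T₀ : C → C) (η₀ : ∀ X : C, X ⟶ T₀ X) where
  bind : ∀ X Y : C,
    (hom.obj (op X)).obj (T₀ Y) ⟶ (hom.obj (op (T₀ X))).obj (T₀ Y)
  law_unit_right : ∀ X Y : C,
    bind X Y ≫ (hom.map (η₀ X).op).app (T₀ Y) = 𝟙 _
  law_unit_left : ∀ X : C,
    E.j X ≫ (hom.obj (op X)).map (η₀ X) ≫ bind X X = E.j (T₀ X)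
  law_M : ∀ X Y Z : C,
    (bind Y Z ▷ (hom.obj (op X)).obj (T₀ Y)) ≫ E.M X (T₀ Y) (T₀ Z) ≫ bind X Z
      = (bind Y Z ⊗ₘ bind X Y) ≫ E.M (T₀ X) (T₀ Y) (T₀ Z)

namespace St15

variable {act : V ⥤ C ⥤ C} {hom : Cᵒᵖ ⥤ C ⥤ V}

section Phi

variable (adj : ∀ X : C, act.flip.obj X ⊣ hom.obj (op X))

/-- Transpose `V`-side morphisms to `C`-side morphisms. -/
def ψ (X : C) {A : V} {B : C} (k : A ⟶ (hom.obj (op X)).obj B) :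
    (act.obj A).obj X ⟶ B :=
  ((adj X).homEquiv A B).symm k

/-- Transpose `C`-side morphisms to `V`-side morphisms. -/
def φ' (X : C) {A : V} {B : C} (f : (act.obj A).obj X ⟶ B) :
    A ⟶ (hom.obj (op X)).obj B :=
  (adj X).homEquiv A B f

lemma ψφ (X : C) {A : V} {B : C} (f : (act.obj A).obj X ⟶ B) :
    ψ adj X (φ' adj X f) = f :=
  ((adj X).homEquiv A B).symm_apply_apply f

lemma φψ (X : C) {A : V} {B : C} (k : A ⟶ (hom.obj (op X)).obj B) :
    φ' adj X (ψ adj X k) = k :=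
  ((adj X).homEquiv A B).apply_symm_apply k

lemma φ_inj (X : C) {A : V} {B : C} {f g : (act.obj A).obj X ⟶ B}
    (h : φ' adj X f = φ' adj X g) : f = g :=
  ((adj X).homEquiv A B).injective h

lemma ψ_inj (X : C) {A : V} {B : C} {f g : A ⟶ (hom.obj (op X)).obj B}
    (h : ψ adj X f = ψ adj X g) : f = g :=
  ((adj X).homEquiv A B).symm.injective h

lemma ψ_left (X : C) {A' A : V} {B : C} (u : A' ⟶ A) (k : A ⟶ (hom.obj (op X)).obj B) :
    ψ adj X (u ≫ k) = (act.map u).app X ≫ ψ adj X k :=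
  (adj X).homEquiv_naturality_left_symm u k

lemma ψ_right (X : C) {A : V} {B B' : C} (k : A ⟶ (hom.obj (op X)).obj B)
    (g : B ⟶ B') :
    ψ adj X (k ≫ (hom.obj (op X)).map g) = ψ adj X k ≫ g :=
  (adj X).homEquiv_naturality_right_symm k g

lemma φ_left (X : C) {A' A : V} {B : C} (u : A' ⟶ A) (f : (act.obj A).obj X ⟶ B) :
    φ' adj X ((act.map u).app X ≫ f) = u ≫ φ' adj X f :=
  (adj X).homEquiv_naturality_left u f

lemma φ_right (X : C) {A : V} {B B' : C} (f : (act.obj A).obj X ⟶ B) (g : B ⟶ B') :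
    φ' adj X (f ≫ g) = φ' adj X f ≫ (hom.obj (op X)).map g :=
  (adj X).homEquiv_naturality_right f g

lemma ψ_eq (X : C) {A : V} {B : C} (k : A ⟶ (hom.obj (op X)).obj B) :
    ψ adj X k = (act.map k).app X ≫ (adj X).counit.app B :=
  (adj X).homEquiv_counit A B k

lemma ψ_id (X : C) {B : C} :
    ψ adj X (𝟙 ((hom.obj (op X)).obj B)) = (adj X).counit.app B := by
  rw [ψ_eq]; simp

lemma φ_counit (X : C) {B : C} :
    φ' adj X ((adj X).counit.app B) = 𝟙 ((hom.obj (op X)).obj B) := by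
  rw [← ψ_id adj X, φψ]

lemma ψ_map (X : C) {B B' : C} (g : B ⟶ B') :
    ψ adj X ((hom.obj (op X)).map g) = (adj X).counit.app B ≫ g := by
  have := ψ_right adj X (𝟙 ((hom.obj (op X)).obj B)) g
  rwa [Category.id_comp, ψ_id] at this

end Phi

section Rel

variable (adj : ∀ X : C, act.flip.obj X ⊣ hom.obj (op X))
variable {AC : ActionStr act} {EC : EnrichmentStr hom}
variable (hrel : EnrRelated act hom adj AC EC)

include hrel

lemma j_eq (X : C) : EC.j X = φ' adj X (AC.lam X).hom := hrel.1 X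

lemma ψ_j (X : C) : ψ adj X (EC.j X) = (AC.lam X).hom := by
  rw [j_eq adj hrel]; exact ψφ adj X _

lemma ψ_M (X Y Z : C) :
    ψ adj X (EC.M X Y Z)
      = (AC.assoc ((hom.obj (op Y)).obj Z) ((hom.obj (op X)).obj Y) X).hom
        ≫ (act.obj ((hom.obj (op Y)).obj Z)).map ((adj X).counit.app Y)
        ≫ (adj Y).counit.app Z := by
  rw [hrel.2 X Y Z]; exact ψφ adj X _

/-- Master composition lemma: composition `M` against a pair of generalized
elements, in terms of the action. -/
lemma Mlem {A B : V} {X Y Z : C}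
    (g : A ⟶ (hom.obj (op Y)).obj Z) (h : B ⟶ (hom.obj (op X)).obj Y) :
    (g ⊗ₘ h) ≫ EC.M X Y Z
      = φ' adj X ((AC.assoc A B X).hom
          ≫ (act.obj A).map (ψ adj X h) ≫ ψ adj Y g) := by
  apply ψ_inj adj X
  rw [ψφ, ψ_left, ψ_M adj hrel]
  have hassoc := AC.assoc_natural g h (𝟙 X)
  simp only [CategoryTheory.Functor.map_id, Category.id_comp,
    Category.comp_id] at hassoc
  rw [reassoc_of% hassoc]
  congr 1
  have hn : (act.map g).app ((act.obj B).obj X)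
        ≫ (act.obj ((hom.obj (op Y)).obj Z)).map (ψ adj X h)
      = (act.obj A).map (ψ adj X h) ≫ (act.map g).app Y :=
    ((act.map g).naturality (ψ adj X h)).symm
  rw [← Functor.map_comp_assoc, ← ψ_eq adj X h, reassoc_of% hn, ← ψ_eq adj Y g]

/-- First-variable functoriality of `hom`, expressed through the adjunctions. -/
lemma ψ_hom_map {X X' B : C} (f : X ⟶ X') {A : V}
    (k : A ⟶ (hom.obj (op X')).obj B) :
    ψ adj X (k ≫ (hom.map f.op).app B) = (act.obj A).map f ≫ ψ adj X' k := by
  have key : k ≫ (hom.map f.op).app B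
      = (ρ_ A).inv ≫ (k ⊗ₘ (EC.j X ≫ (hom.obj (op X)).map f)) ≫ EC.M X X' B := by
    rw [EC.j_extranatural f]
    calc k ≫ (hom.map f.op).app B
        = (ρ_ A).inv ≫ (k ▷ 𝟙_ V)
            ≫ (ρ_ ((hom.obj (op X')).obj B)).hom ≫ (hom.map f.op).app B := by
          simp
      _ = (ρ_ A).inv ≫ (k ▷ 𝟙_ V)
            ≫ (((hom.obj (op X')).obj B) ◁ EC.j X') ≫ EC.M X' X' B
            ≫ (hom.map f.op).app B := by
          rw [reassoc_of% (EC.unit_right X' B)]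
      _ = (ρ_ A).inv ≫ (k ▷ 𝟙_ V)
            ≫ (((hom.obj (op X')).obj B) ◁ EC.j X')
            ≫ (((hom.obj (op X')).obj B) ◁ (hom.map f.op).app X')
            ≫ EC.M X X' B := by
          rw [EC.M_natural_left f X' B]
      _ = (ρ_ A).inv
          ≫ (k ⊗ₘ (EC.j X' ≫ (hom.map f.op).app X')) ≫ EC.M X X' B := by
          rw [tensorHom_def k (EC.j X' ≫ (hom.map f.op).app X'),
            MonoidalCategory.whiskerLeft_comp]
          simp only [Category.assoc]
  rw [key, Mlem adj hrel k (EC.j X ≫ (hom.obj (op X)).map f), ψ_left, ψφ]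
  rw [ψ_right, ψ_j adj hrel, Functor.map_comp]
  have htri := AC.triangle A X
  simp only [Category.assoc]
  rw [reassoc_of% htri]

end Rel

lemma kleisliExt_ext {a : LeftAction V C} {T₀ : C → C} {η₀ : ∀ X : C, X ⟶ T₀ X}
    {S T : KleisliExt a T₀ η₀}
    (h : ∀ (Γ : V) (X Y : C) (f : a.act Γ X ⟶ T₀ Y), S.ext f = T.ext f) :
    S = T := by
  obtain ⟨e₁, n₁, u₁, eu₁, a₁⟩ := S
  obtain ⟨e₂, n₂, u₂, eu₂, a₂⟩ := T
  have : @e₁ = @e₂ := by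
    funext Γ X Y f
    exact h Γ X Y f
  subst this
  rfl

lemma enrichedBind_ext {E : EnrichmentStr hom} {T₀ : C → C}
    {η₀ : ∀ X : C, X ⟶ T₀ X} {S T : EnrichedBind E T₀ η₀}
    (h : ∀ X Y : C, S.bind X Y = T.bind X Y) : S = T := by
  obtain ⟨b₁, _, _, _⟩ := S
  obtain ⟨b₂, _, _, _⟩ := T
  have : b₁ = b₂ := by funext X Y; exact h X Y
  subst this
  rfl

section Monad

variable (adj : ∀ X : C, act.flip.obj X ⊣ hom.obj (op X))
variable {AC : ActionStr act} {EC : EnrichmentStr hom}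
variable (hrel : EnrRelated act hom adj AC EC)
variable {T₀ : C → C} {η₀ : ∀ X : C, X ⟶ T₀ X}

/-- `KleisliExt.natural`, phrased directly in terms of `act`. -/
lemma Knat (S : KleisliExt AC.toLeftAction T₀ η₀) {Γ Δ : V} (u : Γ ⟶ Δ)
    {X Y : C} (f : (act.obj Δ).obj X ⟶ T₀ Y) :
    S.ext ((act.map u).app X ≫ f) = (act.map u).app (T₀ X) ≫ S.ext f :=
  S.natural u f

lemma Kunit (S : KleisliExt AC.toLeftAction T₀ η₀) (X : C) :
    S.ext ((AC.lam X).hom ≫ η₀ X) = (AC.lam (T₀ X)).hom :=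
  S.law_unit X

lemma KextUnit (S : KleisliExt AC.toLeftAction T₀ η₀) {Γ : V} {X Y : C}
    (f : (act.obj Γ).obj X ⟶ T₀ Y) :
    (act.obj Γ).map (η₀ X) ≫ S.ext f = f :=
  S.law_ext_unit f

lemma Kassoc (S : KleisliExt AC.toLeftAction T₀ η₀) {Γ' Γ : V} {X Y Z : C}
    (f : (act.obj Γ).obj X ⟶ T₀ Y) (g : (act.obj Γ').obj Y ⟶ T₀ Z) :
    (AC.assoc Γ' Γ (T₀ X)).hom ≫ (act.obj Γ').map (S.ext f) ≫ S.ext g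
      = S.ext ((AC.assoc Γ' Γ X).hom ≫ (act.obj Γ').map f ≫ S.ext g) :=
  S.law_assoc f g

include hrel

/-- From a strong monad to an enriched monad. -/
def toBind (S : KleisliExt AC.toLeftAction T₀ η₀) : EnrichedBind EC T₀ η₀ where
  bind X Y := φ' adj (T₀ X) (S.ext ((adj X).counit.app (T₀ Y)))
  law_unit_right X Y := by
    apply ψ_inj adj X
    erw [ψ_hom_map adj hrel (η₀ X), ψφ, ψ_id]
    exact KextUnit S _
  law_unit_left X := by
    apply ψ_inj adj (T₀ X)
    erw [ψ_j adj hrel, ← Category.assoc, ψ_left, ψφ, ← Knat S, ← ψ_eq, ψ_right,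
      ψ_j adj hrel, Kunit S]
  law_M X Y Z := by
    apply ψ_inj adj (T₀ X)
    erw [← tensorHom_id, ← Category.assoc, Mlem adj hrel, ψ_id, ψφ, ψ_left, ψφ,
      ← Knat S, ← ψ_eq, ψφ, Mlem adj hrel, ψφ, ψφ, ψφ, Kassoc S]
    rfl

/-- From an enriched monad to a strong monad. -/
def ofBind (Bb : EnrichedBind EC T₀ η₀) : KleisliExt AC.toLeftAction T₀ η₀ where
  ext {Γ X Y} f := ψ adj (T₀ X) (φ' adj X f ≫ Bb.bind X Y)
  natural {Γ Δ} u {X Y} f := by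
    show ψ adj (T₀ X) (φ' adj X ((act.map u).app X ≫ f) ≫ Bb.bind X Y)
        = (act.map u).app (T₀ X) ≫ ψ adj (T₀ X) (φ' adj X f ≫ Bb.bind X Y)
    erw [φ_left, Category.assoc, ψ_left]
  law_unit X := by
    show ψ adj (T₀ X) (φ' adj X ((AC.lam X).hom ≫ η₀ X) ≫ Bb.bind X X)
        = (AC.lam (T₀ X)).hom
    rw [φ_right, ← j_eq adj hrel, Category.assoc, Bb.law_unit_left, ψ_j adj hrel]
  law_ext_unit {Γ X Y} f := by
    show (act.obj Γ).map (η₀ X) ≫ ψ adj (T₀ X) (φ' adj X f ≫ Bb.bind X Y) = f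
    erw [← ψ_hom_map adj hrel (η₀ X), Category.assoc, Bb.law_unit_right,
      Category.comp_id, ψφ]
  law_assoc {Γ' Γ X Y Z} f g := by
    show (AC.assoc Γ' Γ (T₀ X)).hom
          ≫ (act.obj Γ').map (ψ adj (T₀ X) (φ' adj X f ≫ Bb.bind X Y))
          ≫ ψ adj (T₀ Y) (φ' adj Y g ≫ Bb.bind Y Z)
        = ψ adj (T₀ X) (φ' adj X ((AC.assoc Γ' Γ X).hom ≫ (act.obj Γ').map f
            ≫ ψ adj (T₀ Y) (φ' adj Y g ≫ Bb.bind Y Z)) ≫ Bb.bind X Z)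
    apply φ_inj adj (T₀ X)
    erw [φψ,
      ← Mlem adj hrel (φ' adj Y g ≫ Bb.bind Y Z) (φ' adj X f ≫ Bb.bind X Y),
      ← tensorHom_comp_tensorHom, Category.assoc, ← Bb.law_M, ← tensorHom_id,
      tensorHom_comp_tensorHom_assoc, Category.comp_id,
      reassoc_of% (Mlem adj hrel (φ' adj Y g ≫ Bb.bind Y Z) (φ' adj X f)), ψφ]

/-- The bijection between strong and enriched monads on fixed `(T₀, η₀)`. -/
def monadEquiv : KleisliExt AC.toLeftAction T₀ η₀ ≃ EnrichedBind EC T₀ η₀ where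
  toFun := toBind adj hrel
  invFun := ofBind adj hrel
  left_inv S := by
    apply kleisliExt_ext
    intro Γ X Y f
    show ψ adj (T₀ X) (φ' adj X f
        ≫ φ' adj (T₀ X) (S.ext ((adj X).counit.app (T₀ Y)))) = S.ext f
    erw [ψ_left, ψφ, ← Knat S, ← ψ_eq, ψφ]
  right_inv Bb := by
    apply enrichedBind_ext
    intro X Y
    show φ' adj (T₀ X)
        (ψ adj (T₀ X) (φ' adj X ((adj X).counit.app (T₀ Y)) ≫ Bb.bind X Y))
      = Bb.bind X Y
    rw [φψ, φ_counit, Category.id_comp]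

end Monad

end St15
namespace St15

variable {act : V ⥤ C ⥤ C} {hom : Cᵒᵖ ⥤ C ⥤ V}
variable (adj : ∀ X : C, act.flip.obj X ⊣ hom.obj (op X))
variable {AC : ActionStr act} {EC : EnrichmentStr hom}
variable (hrel : EnrRelated act hom adj AC EC)

lemma counit_nat (X : C) {B B' : C} (g : B ⟶ B') :
    (act.map ((hom.obj (op X)).map g)).app X ≫ (adj X).counit.app B'
      = (adj X).counit.app B ≫ g := by
  rw [← ψ_eq, ψ_map]

include hrel

lemma toBind_bind {T₀ : C → C} {η₀ : ∀ X : C, X ⟶ T₀ X}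
    (S : KleisliExt AC.toLeftAction T₀ η₀) (X Y : C) :
    (toBind adj hrel S).bind X Y
      = φ' adj (T₀ X) (S.ext ((adj X).counit.app (T₀ Y))) := rfl

/-- A monad morphism is strong iff it is enriched. -/
lemma strong_iff_enriched
    {S₀ : C → C} {ηS : ∀ X : C, X ⟶ S₀ X} {T₀ : C → C} {ηT : ∀ X : C, X ⟶ T₀ X}
    (MS : KleisliExt AC.toLeftAction S₀ ηS) (MT : KleisliExt AC.toLeftAction T₀ ηT)
    (τ : ∀ X : C, S₀ X ⟶ T₀ X) :
    (∀ (Γ : V) (X Y : C) (f : (act.obj Γ).obj X ⟶ S₀ Y),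
        MS.ext f ≫ τ Y = (act.obj Γ).map (τ X) ≫ MT.ext (f ≫ τ Y)) ↔
      (∀ X Y : C,
        (toBind adj hrel MS).bind X Y ≫ (hom.obj (op (S₀ X))).map (τ Y)
          = (hom.obj (op X)).map (τ Y) ≫ (toBind adj hrel MT).bind X Y
              ≫ (hom.map (τ X).op).app (T₀ Y)) := by
  have hrw1 : ∀ X Y : C,
      ψ adj (S₀ X) ((toBind adj hrel MS).bind X Y
          ≫ (hom.obj (op (S₀ X))).map (τ Y))
        = MS.ext ((adj X).counit.app (S₀ Y)) ≫ τ Y := by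
    intro X Y
    erw [toBind_bind, ψ_right, ψφ]
    rfl
  have hrw2 : ∀ X Y : C,
      ψ adj (S₀ X) ((hom.obj (op X)).map (τ Y)
          ≫ (toBind adj hrel MT).bind X Y ≫ (hom.map (τ X).op).app (T₀ Y))
        = (act.obj ((hom.obj (op X)).obj (S₀ Y))).map (τ X)
            ≫ MT.ext ((adj X).counit.app (S₀ Y) ≫ τ Y) := by
    intro X Y
    erw [toBind_bind, ← Category.assoc, ψ_hom_map adj hrel (τ X), ψ_left, ψφ,
      ← Knat MT, counit_nat adj X (τ Y)]
    rfl
  constructor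
  · intro hs X Y
    apply ψ_inj adj (S₀ X)
    rw [hrw1, hrw2]
    exact hs _ X Y _
  · intro he Γ X Y f
    have hε := congrArg (ψ adj (S₀ X)) (he X Y)
    rw [hrw1, hrw2] at hε
    have hf : (act.map (φ' adj X f)).app X ≫ (adj X).counit.app (S₀ Y) = f := by
      rw [← ψ_eq, ψφ]
    have hnat : (act.map (φ' adj X f)).app (S₀ X)
          ≫ (act.obj ((hom.obj (op X)).obj (S₀ Y))).map (τ X)
        = (act.obj Γ).map (τ X) ≫ (act.map (φ' adj X f)).app (T₀ X) :=
      ((act.map (φ' adj X f)).naturality (τ X)).symm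
    calc (MS.ext f ≫ τ Y : (act.obj Γ).obj (S₀ X) ⟶ T₀ Y)
        = (MS.ext ((act.map (φ' adj X f)).app X
            ≫ (adj X).counit.app (S₀ Y)) ≫ τ Y : (act.obj Γ).obj (S₀ X) ⟶ T₀ Y) := by erw [hf]
      _ = (act.map (φ' adj X f)).app (S₀ X)
            ≫ MS.ext ((adj X).counit.app (S₀ Y)) ≫ τ Y := by
          erw [Knat MS, Category.assoc]
      _ = (act.map (φ' adj X f)).app (S₀ X)
            ≫ (act.obj ((hom.obj (op X)).obj (S₀ Y))).map (τ X)
            ≫ MT.ext ((adj X).counit.app (S₀ Y) ≫ τ Y) := by erw [hε]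
      _ = (act.obj Γ).map (τ X) ≫ (act.map (φ' adj X f)).app (T₀ X)
            ≫ MT.ext ((adj X).counit.app (S₀ Y) ≫ τ Y) := by
          erw [reassoc_of% hnat]
      _ = (act.obj Γ).map (τ X) ≫ MT.ext ((act.map (φ' adj X f)).app X
            ≫ (adj X).counit.app (S₀ Y) ≫ τ Y) := by erw [Knat MT]; rfl
      _ = (act.obj Γ).map (τ X) ≫ MT.ext (f ≫ τ Y) := by
          erw [← Category.assoc, hf]

end St15
/-- under the correspondence between actions and enrichments,
strong monads on `C` are in bijection with enriched monads on `C`, preserving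
the underlying data `(T₀, η₀)` (hence the underlying ordinary monads), via the
canonical bijection sending the Kleisli extension `♯` to
`bind = ((counit)♯)^t`; and a monad morphism is strong iff it is enriched. -/
theorem statement15
    (act : V ⥤ C ⥤ C) (hom : Cᵒᵖ ⥤ C ⥤ V)
    (adj : ∀ X : C, act.flip.obj X ⊣ hom.obj (op X))
    (ih : V → V ⥤ V) (adjT : ∀ Γ : V, tensorRight Γ ⊣ ih Γ)
    (AC : ActionStr act) (EC : EnrichmentStr hom)
    (hrel : EnrRelated act hom adj AC EC) :
    ∃ e : ∀ (T₀ : C → C) (η₀ : ∀ X : C, X ⟶ T₀ X),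
        KleisliExt AC.toLeftAction T₀ η₀ ≃ EnrichedBind EC T₀ η₀,
      (∀ (T₀ : C → C) (η₀ : ∀ X : C, X ⟶ T₀ X)
          (S : KleisliExt AC.toLeftAction T₀ η₀) (X Y : C),
        (e T₀ η₀ S).bind X Y
          = (adj (T₀ X)).homEquiv _ _ (S.ext ((adj X).counit.app (T₀ Y)))) ∧
      (∀ (S₀ : C → C) (ηS : ∀ X : C, X ⟶ S₀ X)
          (T₀ : C → C) (ηT : ∀ X : C, X ⟶ T₀ X)
          (MS : KleisliExt AC.toLeftAction S₀ ηS)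
          (MT : KleisliExt AC.toLeftAction T₀ ηT)
          (τ : ∀ X : C, S₀ X ⟶ T₀ X),
        (∀ X : C, ηS X ≫ τ X = ηT X) →
        ((∀ (Γ : V) (X Y : C) (f : AC.toLeftAction.act Γ X ⟶ S₀ Y),
            MS.ext f ≫ τ Y
              = AC.toLeftAction.actMap Γ (τ X) ≫ MT.ext (f ≫ τ Y)) ↔
          (∀ X Y : C,
            (e S₀ ηS MS).bind X Y ≫ (hom.obj (op (S₀ X))).map (τ Y)
              = (hom.obj (op X)).map (τ Y) ≫ (e T₀ ηT MT).bind X Y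
                  ≫ (hom.map (τ X).op).app (T₀ Y)))) := by
  refine ⟨fun T₀ η₀ => St15.monadEquiv adj hrel, fun T₀ η₀ S X Y => rfl, ?_⟩
  intro S₀ ηS T₀ ηT MS MT τ hτ
  exact St15.strong_iff_enriched adj hrel MS MT τ
end

section
/- If F is a powered endofunctor on a category C powered over V, and T is the algebraically free monad on the underlying ordinary functor of F, then T carries a canonical powered monad structure, obtained by lifting the powering ⋔ to the category of F-algebras via Γ ⋔_F (A, a) = (Γ ⋔ A, (Γ ⋔ a) ∘ F⟨Γ⟩ id_{Γ⋔A}) and transporting it to the Eilenberg–Moore category of T along the isomorphism F-Alg ≅ C^T. -/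
open CategoryTheory MonoidalCategory

universe v₁ v₂ v₃ u₁ u₂ u₃

open Opposite

/-- A powering of `C` over the monoidal category `V`: a functor
`⋔ : Vᵒᵖ × C ⥤ C` with natural isomorphisms `i : X ≅ I ⋔ X` and
`p : Γ ⋔ (Γ' ⋔ X) ≅ (Γ' ⊗ Γ) ⋔ X` satisfying the coherence laws. -/
structure Powering (V : Type u₁) [Category.{v₁} V] [MonoidalCategory V]
    (C : Type u₂) [Category.{v₂} C] where
  P : Vᵒᵖ ⥤ C ⥤ C
  i : ∀ X : C, X ≅ (P.obj (op (𝟙_ V))).obj X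
  i_natural : ∀ {X Y : C} (f : X ⟶ Y),
    f ≫ (i Y).hom = (i X).hom ≫ (P.obj (op (𝟙_ V))).map f
  p : ∀ (Γ Γ' : V) (X : C),
    (P.obj (op Γ)).obj ((P.obj (op Γ')).obj X) ≅ (P.obj (op (Γ' ⊗ Γ))).obj X
  p_natural_obj : ∀ (Γ Γ' : V) {X Y : C} (f : X ⟶ Y),
    (P.obj (op Γ)).map ((P.obj (op Γ')).map f) ≫ (p Γ Γ' Y).hom
      = (p Γ Γ' X).hom ≫ (P.obj (op (Γ' ⊗ Γ))).map f
  p_natural_ctx : ∀ {Γ Δ Γ' Δ' : V} (u : Γ ⟶ Δ) (v : Γ' ⟶ Δ') (X : C),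
    (P.obj (op Δ)).map ((P.map v.op).app X)
        ≫ (P.map u.op).app ((P.obj (op Γ')).obj X) ≫ (p Γ Γ' X).hom
      = (p Δ Δ' X).hom ≫ (P.map (v ⊗ₘ u).op).app X
  coh_unit_inner : ∀ (Γ : V) (X : C),
    (P.obj (op Γ)).map (i X).hom ≫ (p Γ (𝟙_ V) X).hom
      = (P.map (λ_ Γ).hom.op).app X
  coh_unit_outer : ∀ (Γ : V) (X : C),
    (i ((P.obj (op Γ)).obj X)).hom ≫ (p (𝟙_ V) Γ X).hom
      = (P.map (ρ_ Γ).hom.op).app X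
  coh_pentagon : ∀ (Γ₁ Γ₂ Γ₃ : V) (X : C),
    (P.obj (op Γ₃)).map (p Γ₂ Γ₁ X).hom ≫ (p Γ₃ (Γ₁ ⊗ Γ₂) X).hom
      = (p Γ₃ Γ₂ ((P.obj (op Γ₁)).obj X)).hom ≫ (p (Γ₂ ⊗ Γ₃) Γ₁ X).hom
          ≫ (P.map (α_ Γ₁ Γ₂ Γ₃).hom.op).app X

/-- A powered functor structure on an object assignment `obj : C → D`:
operations sending `f : X ⟶ Γ ⋔ Y` to `F⟨Γ⟩f : F X ⟶ Γ ⋔ F Y`, natural in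
`Γ` and compatible with `i` and `p`. -/
structure PoweredFunctorStr {V : Type u₁} [Category.{v₁} V] [MonoidalCategory V]
    {C : Type u₂} [Category.{v₂} C] {D : Type u₃} [Category.{v₃} D]
    (pC : Powering V C) (pD : Powering V D) (obj : C → D) where
  pmap : ∀ {Γ : V} {X Y : C},
    (X ⟶ (pC.P.obj (op Γ)).obj Y) → (obj X ⟶ (pD.P.obj (op Γ)).obj (obj Y))
  natural : ∀ {Γ Δ : V} (u : Γ ⟶ Δ) {X Y : C}
      (f : X ⟶ (pC.P.obj (op Δ)).obj Y),
    pmap (f ≫ (pC.P.map u.op).app Y) = pmap f ≫ (pD.P.map u.op).app (obj Y)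
  unit : ∀ X : C, pmap (pC.i X).hom = (pD.i (obj X)).hom
  comp : ∀ {Γ Γ' : V} {X Y Z : C}
      (f : X ⟶ (pC.P.obj (op Γ)).obj Y) (g : Y ⟶ (pC.P.obj (op Γ')).obj Z),
    pmap (f ≫ (pC.P.obj (op Γ)).map g ≫ (pC.p Γ Γ' Z).hom)
      = pmap f ≫ (pD.P.obj (op Γ)).map (pmap g) ≫ (pD.p Γ Γ' (obj Z)).hom

/-- Powered naturality of `τ : F ⟶ G` with respect to powered functor
structures on `F` and `G`. -/
def IsPoweredNatTrans {V : Type u₁} [Category.{v₁} V] [MonoidalCategory V]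
    {C : Type u₂} [Category.{v₂} C] {D : Type u₃} [Category.{v₃} D]
    {pC : Powering V C} {pD : Powering V D} {F G : C ⥤ D}
    (SF : PoweredFunctorStr pC pD F.obj) (SG : PoweredFunctorStr pC pD G.obj)
    (τ : F ⟶ G) : Prop :=
  ∀ {Γ : V} {X Y : C} (f : X ⟶ (pC.P.obj (op Γ)).obj Y),
    SF.pmap f ≫ (pD.P.obj (op Γ)).map (τ.app Y) = τ.app X ≫ SG.pmap f
variable {V : Type u₁} [Category.{v₁} V] [MonoidalCategory V]
variable {C : Type u₂} [Category.{v₂} C]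

/-- A powered monad structure over the underlying data of a monad `T`, with
respect to a powering of `C` over `V`. -/
structure PoweredMonadStr (pw : Powering V C) (T : Monad C) where
  pext : ∀ {Γ : V} {X Y : C},
    (X ⟶ (pw.P.obj (op Γ)).obj (T.obj Y)) →
      (T.obj X ⟶ (pw.P.obj (op Γ)).obj (T.obj Y))
  natural : ∀ {Γ Δ : V} (u : Γ ⟶ Δ) {X Y : C}
      (f : X ⟶ (pw.P.obj (op Δ)).obj (T.obj Y)),
    pext (f ≫ (pw.P.map u.op).app (T.obj Y))
      = pext f ≫ (pw.P.map u.op).app (T.obj Y)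
  law_unit : ∀ X : C,
    pext (T.η.app X ≫ (pw.i (T.obj X)).hom) = (pw.i (T.obj X)).hom
  law_pext_unit : ∀ {Γ : V} {X Y : C}
      (f : X ⟶ (pw.P.obj (op Γ)).obj (T.obj Y)),
    T.η.app X ≫ pext f = f
  law_assoc : ∀ {Γ Γ' : V} {X Y Z : C}
      (f : X ⟶ (pw.P.obj (op Γ)).obj (T.obj Y))
      (g : Y ⟶ (pw.P.obj (op Γ')).obj (T.obj Z)),
    pext f ≫ (pw.P.obj (op Γ)).map (pext g) ≫ (pw.p Γ Γ' (T.obj Z)).hom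
      = pext (f ≫ (pw.P.obj (op Γ)).map (pext g) ≫ (pw.p Γ Γ' (T.obj Z)).hom)

/-- The underlying ordinary monad of the powered monad structure `S` is `T`
itself. -/
def PoweredMonadStr.Underlies {pw : Powering V C} {T : Monad C}
    (S : PoweredMonadStr pw T) : Prop :=
  (∀ {X Y : C} (f : X ⟶ Y),
    T.map f
      = S.pext (f ≫ T.η.app Y ≫ (pw.i (T.obj Y)).hom) ≫ (pw.i (T.obj Y)).inv) ∧
  (∀ X : C,
    T.μ.app X = S.pext ((pw.i (T.obj X)).hom) ≫ (pw.i (T.obj X)).inv)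

/-- A lifting of the powering of `C` over `V` to the Eilenberg–Moore category
of `T`. -/
structure EMLifting (pw : Powering V C) (T : Monad C) where
  L : Powering V (T.Algebra)
  forget_comm :
    L.P ⋙ (Functor.whiskeringRight T.Algebra T.Algebra C).obj T.forget
      = pw.P ⋙ (Functor.whiskeringLeft T.Algebra C C).obj T.forget

namespace S18

variable {pw : Powering V C} {F₀ : C ⥤ C} (PF : PoweredFunctorStr pw pw F₀.obj)

section CLevel

variable (hund : ∀ {X Y : C} (f : X ⟶ Y),
      PF.pmap (f ≫ (pw.i Y).hom) = F₀.map f ≫ (pw.i (F₀.obj Y)).hom)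

include hund

theorem pmap_left {Γ : V} {X' X Y : C} (g : X' ⟶ X) (f : X ⟶ (pw.P.obj (op Γ)).obj Y) :
    PF.pmap (g ≫ f) = F₀.map g ≫ PF.pmap f := by
  rw [← cancel_mono ((pw.P.map (ρ_ Γ).hom.op).app (F₀.obj Y))]
  have h1 := PF.comp (g ≫ (pw.i X).hom) f
  have h2 : (g ≫ (pw.i X).hom) ≫ (pw.P.obj (op (𝟙_ V))).map f ≫ (pw.p (𝟙_ V) Γ Y).hom
      = (g ≫ f) ≫ (pw.P.map (ρ_ Γ).hom.op).app Y := by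
    rw [← pw.coh_unit_outer Γ Y]
    slice_lhs 2 3 => rw [← pw.i_natural f]
    simp
  rw [h2, PF.natural (ρ_ Γ).hom (g ≫ f), hund g] at h1
  rw [h1, ← pw.coh_unit_outer Γ (F₀.obj Y)]
  slice_lhs 2 3 => rw [← pw.i_natural (PF.pmap f)]
  simp

theorem pmap_right {Γ : V} {X Y Y' : C} (f : X ⟶ (pw.P.obj (op Γ)).obj Y) (g : Y ⟶ Y') :
    PF.pmap (f ≫ (pw.P.obj (op Γ)).map g)
      = PF.pmap f ≫ (pw.P.obj (op Γ)).map (F₀.map g) := by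
  rw [← cancel_mono ((pw.P.map (λ_ Γ).hom.op).app (F₀.obj Y'))]
  have h1 := PF.comp f (g ≫ (pw.i Y').hom)
  have h2 : f ≫ (pw.P.obj (op Γ)).map (g ≫ (pw.i Y').hom) ≫ (pw.p Γ (𝟙_ V) Y').hom
      = (f ≫ (pw.P.obj (op Γ)).map g) ≫ (pw.P.map (λ_ Γ).hom.op).app Y' := by
    rw [← pw.coh_unit_inner Γ Y']
    simp
  rw [h2, PF.natural (λ_ Γ).hom (f ≫ (pw.P.obj (op Γ)).map g), hund g] at h1
  rw [h1, ← pw.coh_unit_inner Γ (F₀.obj Y')]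
  simp

end CLevel

section AlgLevel

variable (hund : ∀ {X Y : C} (f : X ⟶ Y),
      PF.pmap (f ≫ (pw.i Y).hom) = F₀.map f ≫ (pw.i (F₀.obj Y)).hom)

/-- The lifted F₀-algebra `Γ ⋔_F A`. -/
def liftAlg (Γ : V) (A : Endofunctor.Algebra F₀) : Endofunctor.Algebra F₀ :=
  ⟨(pw.P.obj (op Γ)).obj A.a,
    PF.pmap (𝟙 ((pw.P.obj (op Γ)).obj A.a)) ≫ (pw.P.obj (op Γ)).map A.str⟩

include hund

theorem liftHom_cond (Γ : V) {A B : Endofunctor.Algebra F₀} (h : A ⟶ B) :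
    F₀.map ((pw.P.obj (op Γ)).map h.f) ≫ (liftAlg PF Γ B).str
      = (liftAlg PF Γ A).str ≫ (pw.P.obj (op Γ)).map h.f := by
  dsimp only [liftAlg]
  have h1 : F₀.map ((pw.P.obj (op Γ)).map h.f) ≫ PF.pmap (𝟙 _)
      = PF.pmap ((pw.P.obj (op Γ)).map h.f) := by
    rw [← pmap_left PF hund]; simp
  have h2 : PF.pmap (𝟙 ((pw.P.obj (op Γ)).obj A.a) ≫ (pw.P.obj (op Γ)).map h.f)
      = PF.pmap (𝟙 _) ≫ (pw.P.obj (op Γ)).map (F₀.map h.f) :=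
    pmap_right PF hund _ _
  rw [reassoc_of% h1]
  simp only [Category.id_comp] at h2
  rw [reassoc_of% h2, ← Functor.map_comp, h.h, Functor.map_comp]
  simp

/-- Morphism action of the lifted powering functor on F₀-algebras. -/
def liftHom (Γ : V) {A B : Endofunctor.Algebra F₀} (h : A ⟶ B) :
    liftAlg PF Γ A ⟶ liftAlg PF Γ B :=
  ⟨(pw.P.obj (op Γ)).map h.f, liftHom_cond PF hund Γ h⟩

theorem ctxHom_cond {Γ Δ : Vᵒᵖ} (w : Γ ⟶ Δ) (A : Endofunctor.Algebra F₀) :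
    F₀.map ((pw.P.map w).app A.a) ≫ (liftAlg PF Δ.unop A).str
      = (liftAlg PF Γ.unop A).str ≫ (pw.P.map w).app A.a := by
  dsimp only [liftAlg]
  have h1 : F₀.map ((pw.P.map w).app A.a) ≫ PF.pmap (𝟙 _)
      = PF.pmap ((pw.P.map w).app A.a) := by
    rw [← pmap_left PF hund]; simp
  have h2 : PF.pmap (𝟙 ((pw.P.obj (op Γ.unop)).obj A.a) ≫ (pw.P.map w.unop.op).app A.a)
      = PF.pmap (𝟙 _) ≫ (pw.P.map w.unop.op).app (F₀.obj A.a) :=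
    PF.natural w.unop (𝟙 _)
  simp only [Category.id_comp, Quiver.Hom.op_unop] at h2
  rw [reassoc_of% h1, h2]
  simp [(pw.P.map w).naturality A.str]

/-- Context action morphisms of the lifted powering on F₀-algebras. -/
def ctxHom {Γ Δ : Vᵒᵖ} (w : Γ ⟶ Δ) (A : Endofunctor.Algebra F₀) :
    liftAlg PF Γ.unop A ⟶ liftAlg PF Δ.unop A :=
  ⟨(pw.P.map w).app A.a, ctxHom_cond PF hund w A⟩

theorem iHom_cond (A : Endofunctor.Algebra F₀) :
    F₀.map (pw.i A.a).hom ≫ (liftAlg PF (𝟙_ V) A).str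
      = A.str ≫ (pw.i A.a).hom := by
  dsimp only [liftAlg]
  have h1 : F₀.map (pw.i A.a).hom ≫ PF.pmap (𝟙 _) = PF.pmap ((pw.i A.a).hom) := by
    rw [← pmap_left PF hund]; simp
  have h2 : PF.pmap (𝟙 A.a ≫ (pw.i A.a).hom) = F₀.map (𝟙 A.a) ≫ (pw.i (F₀.obj A.a)).hom :=
    hund _
  simp only [Category.id_comp, CategoryTheory.Functor.map_id] at h2
  rw [reassoc_of% h1, h2]
  simp [pw.i_natural A.str]

/-- The unit morphism of the lifted powering on F₀-algebras. -/
def iHom (A : Endofunctor.Algebra F₀) : A ⟶ liftAlg PF (𝟙_ V) A :=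
  ⟨(pw.i A.a).hom, iHom_cond PF hund A⟩

theorem pHom_cond (Γ Γ' : V) (A : Endofunctor.Algebra F₀) :
    F₀.map (pw.p Γ Γ' A.a).hom ≫ (liftAlg PF (Γ' ⊗ Γ) A).str
      = (liftAlg PF Γ (liftAlg PF Γ' A)).str ≫ (pw.p Γ Γ' A.a).hom := by
  dsimp only [liftAlg]
  have h1 : F₀.map (pw.p Γ Γ' A.a).hom ≫ PF.pmap (𝟙 _) = PF.pmap ((pw.p Γ Γ' A.a).hom) := by
    rw [← pmap_left PF hund]; simp
  have h2 := PF.comp (𝟙 ((pw.P.obj (op Γ)).obj ((pw.P.obj (op Γ')).obj A.a)))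
    (𝟙 ((pw.P.obj (op Γ')).obj A.a))
  have h2' : PF.pmap (pw.p Γ Γ' A.a).hom
      = PF.pmap (𝟙 ((pw.P.obj (op Γ)).obj ((pw.P.obj (op Γ')).obj A.a))) ≫
        (pw.P.obj (op Γ)).map (PF.pmap (𝟙 ((pw.P.obj (op Γ')).obj A.a)))
          ≫ (pw.p Γ Γ' (F₀.obj A.a)).hom := by simpa using h2
  rw [reassoc_of% h1, h2']
  simp only [Functor.map_comp, Category.assoc]
  rw [← pw.p_natural_obj Γ Γ' A.str]

/-- The composition morphism of the lifted powering on F₀-algebras. -/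
def pHom (Γ Γ' : V) (A : Endofunctor.Algebra F₀) :
    liftAlg PF Γ (liftAlg PF Γ' A) ⟶ liftAlg PF (Γ' ⊗ Γ) A :=
  ⟨(pw.p Γ Γ' A.a).hom, pHom_cond PF hund Γ Γ' A⟩

end AlgLevel

section Transport

/-- Transport a `T`-algebra along an equality of its carrier. -/
def reA {T : Monad C} (B : T.Algebra) {A₀ : C} (e : B.A = A₀) : T.Algebra where
  A := A₀
  a := (T : C ⥤ C).map (eqToHom e.symm) ≫ B.a ≫ eqToHom e
  unit := by subst e; simpa using B.unit
  assoc := by subst e; simpa using B.assoc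

theorem algExt {T : Monad C} {B B' : T.Algebra} (h : B.A = B'.A)
    (h2 : B.a = (T : C ⥤ C).map (eqToHom h) ≫ B'.a ≫ eqToHom h.symm) : B = B' := by
  obtain ⟨A, a, u, s⟩ := B; obtain ⟨A', a', u', s'⟩ := B'
  dsimp at h; subst h
  simp only [eqToHom_refl, CategoryTheory.Functor.map_id, Category.id_comp, Category.comp_id] at h2
  subst h2; rfl

theorem reA_eq {T : Monad C} (B : T.Algebra) {A₀ : C} (e : B.A = A₀) : reA B e = B := by
  subst e
  exact algExt rfl (by dsimp only [reA])

theorem map_app_eqToHom (H : Vᵒᵖ ⥤ C ⥤ C) {Γ Δ : Vᵒᵖ} (w : Γ ⟶ Δ) {c c' : C} (e : c = c') :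
    (H.map w).app c = eqToHom (by rw [e]) ≫ (H.map w).app c' ≫ eqToHom (by rw [e]) := by
  subst e; simp

theorem i_hom_eqToHom {pw : Powering V C} {c c' : C} (e : c = c') :
    (pw.i c).hom = eqToHom e ≫ (pw.i c').hom ≫ eqToHom (by rw [e]) := by
  subst e; simp

theorem p_hom_eqToHom {pw : Powering V C} (Γ Γ' : V) {c c' : C} (e : c = c') :
    (pw.p Γ Γ' c).hom = eqToHom (by rw [e]) ≫ (pw.p Γ Γ' c').hom ≫ eqToHom (by rw [e]) := by
  subst e; simp

end Transport

section EMLevel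

variable (hund : ∀ {X Y : C} (f : X ⟶ Y),
      PF.pmap (f ≫ (pw.i Y).hom) = F₀.map f ≫ (pw.i (F₀.obj Y)).hom)
variable {T : Monad C} (Φ : T.Algebra ⥤ Endofunctor.Algebra F₀)
  (Ψ : Endofunctor.Algebra F₀ ⥤ T.Algebra)
  (hΦΨ : Φ ⋙ Ψ = 𝟭 T.Algebra) (hΨΦ : Ψ ⋙ Φ = 𝟭 (Endofunctor.Algebra F₀))
  (hforget : Φ ⋙ Endofunctor.Algebra.forget F₀ = T.forget)

section Eqs
include hΨΦ hforget in
theorem hPsiForget : Ψ ⋙ T.forget = Endofunctor.Algebra.forget F₀ := by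
  rw [← hforget, ← Functor.assoc, hΨΦ, Functor.id_comp]

include hforget in
theorem ePhi (X : T.Algebra) : (Φ.obj X).a = X.A := Functor.congr_obj hforget X

include hΨΦ hforget in
theorem ePsi (M : Endofunctor.Algebra F₀) : (Ψ.obj M).A = M.a :=
  Functor.congr_obj (hPsiForget Φ Ψ hΨΦ hforget) M

include hΨΦ in
theorem ePhiPsi (M : Endofunctor.Algebra F₀) : Φ.obj (Ψ.obj M) = M :=
  Functor.congr_obj hΨΦ M

include hΦΨ in
theorem ePsiPhi (X : T.Algebra) : Ψ.obj (Φ.obj X) = X :=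
  Functor.congr_obj hΦΨ X

include hforget in
theorem eLift (Γ : V) (X : T.Algebra) :
    (liftAlg PF Γ (Φ.obj X)).a = (pw.P.obj (op Γ)).obj X.A := by
  show (pw.P.obj (op Γ)).obj (Φ.obj X).a = _
  rw [ePhi Φ hforget X]
end Eqs

include hΨΦ hforget in
theorem transfer {M N : Endofunctor.Algebra F₀} (m : M ⟶ N)
    {BM BN : T.Algebra} (eM : BM = Ψ.obj M) (eN : BN = Ψ.obj N)
    {g : BM.A ⟶ BN.A} (e₁ : M.a = BM.A) (e₂ : BN.A = N.a)
    (hg : m.f = eqToHom e₁ ≫ g ≫ eqToHom e₂) :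
    (T : C ⥤ C).map g ≫ BN.a = BM.a ≫ g := by
  subst eM eN
  have hc : (Ψ.map m).f = eqToHom (ePsi Φ Ψ hΨΦ hforget M) ≫ m.f
      ≫ eqToHom (ePsi Φ Ψ hΨΦ hforget N).symm :=
    Functor.congr_hom (hPsiForget Φ Ψ hΨΦ hforget) m
  rw [hg] at hc
  simp only [Category.assoc, eqToHom_trans, eqToHom_refl, Category.comp_id,
    Category.id_comp, eqToHom_trans_assoc] at hc
  have H := (Ψ.map m).h
  rw [hc] at H
  exact H

/-- The lifted `T`-algebra `Γ ⋔ X`, with carrier on the nose. -/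
def liftT (Γ : V) (X : T.Algebra) : T.Algebra :=
  reA (Ψ.obj (liftAlg PF Γ (Φ.obj X))) (A₀ := (pw.P.obj (op Γ)).obj X.A)
    ((ePsi Φ Ψ hΨΦ hforget _).trans (eLift PF Φ hforget Γ X))

include hΨΦ hforget in
theorem liftT_eq (Γ : V) (X : T.Algebra) :
    liftT PF Φ Ψ hΨΦ hforget Γ X = Ψ.obj (liftAlg PF Γ (Φ.obj X)) :=
  reA_eq _ _

include hund hΨΦ hforget in
theorem liftT_map_cond (Γ : V) {X Y : T.Algebra} (f : X ⟶ Y) :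
    (T : C ⥤ C).map ((pw.P.obj (op Γ)).map f.f) ≫ (liftT PF Φ Ψ hΨΦ hforget Γ Y).a
      = (liftT PF Φ Ψ hΨΦ hforget Γ X).a ≫ (pw.P.obj (op Γ)).map f.f := by
  refine transfer Φ Ψ hΨΦ hforget (liftHom PF hund Γ (Φ.map f))
    (liftT_eq PF Φ Ψ hΨΦ hforget Γ X) (liftT_eq PF Φ Ψ hΨΦ hforget Γ Y)
    (eLift PF Φ hforget Γ X) (eLift PF Φ hforget Γ Y).symm ?_
  have hf : (Φ.map f).f = eqToHom (ePhi Φ hforget X) ≫ f.f ≫ eqToHom (ePhi Φ hforget Y).symm :=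
    Functor.congr_hom hforget f
  show (pw.P.obj (op Γ)).map (Φ.map f).f = _
  rw [hf]
  simp [eqToHom_map]
  rfl

include hund hΨΦ hforget in
theorem liftT_ctx_cond {Γ Δ : Vᵒᵖ} (w : Γ ⟶ Δ) (X : T.Algebra) :
    (T : C ⥤ C).map ((pw.P.map w).app X.A) ≫ (liftT PF Φ Ψ hΨΦ hforget Δ.unop X).a
      = (liftT PF Φ Ψ hΨΦ hforget Γ.unop X).a ≫ (pw.P.map w).app X.A :=
  transfer Φ Ψ hΨΦ hforget (ctxHom PF hund w (Φ.obj X))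
    (liftT_eq PF Φ Ψ hΨΦ hforget Γ.unop X) (liftT_eq PF Φ Ψ hΨΦ hforget Δ.unop X)
    (eLift PF Φ hforget Γ.unop X) (eLift PF Φ hforget Δ.unop X).symm
    (map_app_eqToHom pw.P w (ePhi Φ hforget X))

include hund hΦΨ hΨΦ hforget in
theorem liftT_i_cond (X : T.Algebra) :
    (T : C ⥤ C).map (pw.i X.A).hom ≫ (liftT PF Φ Ψ hΨΦ hforget (𝟙_ V) X).a
      = X.a ≫ (pw.i X.A).hom :=
  transfer Φ Ψ hΨΦ hforget (iHom PF hund (Φ.obj X))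
    (ePsiPhi Φ Ψ hΦΨ X).symm (liftT_eq PF Φ Ψ hΨΦ hforget (𝟙_ V) X)
    (ePhi Φ hforget X) (eLift PF Φ hforget (𝟙_ V) X).symm
    (i_hom_eqToHom (ePhi Φ hforget X))

include hund hΦΨ hΨΦ hforget in
theorem liftT_p_cond (Γ Γ' : V) (X : T.Algebra) :
    (T : C ⥤ C).map (pw.p Γ Γ' X.A).hom ≫ (liftT PF Φ Ψ hΨΦ hforget (Γ' ⊗ Γ) X).a
      = (liftT PF Φ Ψ hΨΦ hforget Γ (liftT PF Φ Ψ hΨΦ hforget Γ' X)).a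
          ≫ (pw.p Γ Γ' X.A).hom := by
  have e0 : Φ.obj (liftT PF Φ Ψ hΨΦ hforget Γ' X) = liftAlg PF Γ' (Φ.obj X) := by
    rw [liftT_eq PF Φ Ψ hΨΦ hforget Γ' X, ePhiPsi Φ Ψ hΨΦ]
  have eM : liftT PF Φ Ψ hΨΦ hforget Γ (liftT PF Φ Ψ hΨΦ hforget Γ' X)
      = Ψ.obj (liftAlg PF Γ (liftAlg PF Γ' (Φ.obj X))) := by
    rw [liftT_eq PF Φ Ψ hΨΦ hforget Γ (liftT PF Φ Ψ hΨΦ hforget Γ' X), e0]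
  have e1 : (liftAlg PF Γ (liftAlg PF Γ' (Φ.obj X))).a
      = (pw.P.obj (op Γ)).obj ((pw.P.obj (op Γ')).obj X.A) := by
    show (pw.P.obj (op Γ)).obj ((pw.P.obj (op Γ')).obj (Φ.obj X).a) = _
    rw [ePhi Φ hforget X]
  exact transfer Φ Ψ hΨΦ hforget (pHom PF hund Γ Γ' (Φ.obj X)) eM
    (liftT_eq PF Φ Ψ hΨΦ hforget (Γ' ⊗ Γ) X) e1 (eLift PF Φ hforget (Γ' ⊗ Γ) X).symm
    (p_hom_eqToHom Γ Γ' (ePhi Φ hforget X))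

end EMLevel

section LiftPow

variable (hund : ∀ {X Y : C} (f : X ⟶ Y),
      PF.pmap (f ≫ (pw.i Y).hom) = F₀.map f ≫ (pw.i (F₀.obj Y)).hom)
variable {T : Monad C} (Φ : T.Algebra ⥤ Endofunctor.Algebra F₀)
  (Ψ : Endofunctor.Algebra F₀ ⥤ T.Algebra)
  (hΦΨ : Φ ⋙ Ψ = 𝟭 T.Algebra) (hΨΦ : Ψ ⋙ Φ = 𝟭 (Endofunctor.Algebra F₀))
  (hforget : Φ ⋙ Endofunctor.Algebra.forget F₀ = T.forget)

/-- The lifted powering bifunctor on the Eilenberg–Moore category. -/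
def LPfun : Vᵒᵖ ⥤ T.Algebra ⥤ T.Algebra where
  obj Γo :=
    { obj := fun X => liftT PF Φ Ψ hΨΦ hforget Γo.unop X
      map := fun {X Y} f =>
        ⟨(pw.P.obj (op Γo.unop)).map f.f,
          liftT_map_cond PF hund Φ Ψ hΨΦ hforget Γo.unop f⟩
      map_id := fun X => by ext; exact (pw.P.obj (op Γo.unop)).map_id X.A
      map_comp := fun f g => by ext; exact (pw.P.obj (op Γo.unop)).map_comp f.f g.f }
  map w :=
    { app := fun X =>
        ⟨(pw.P.map w).app X.A, liftT_ctx_cond PF hund Φ Ψ hΨΦ hforget w X⟩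
      naturality := fun X Y f => by ext; exact ((pw.P.map w).naturality f.f) }
  map_id Γo := by ext X; exact congr_fun (congrArg NatTrans.app (pw.P.map_id Γo)) X.A
  map_comp u v := by ext X; exact congr_fun (congrArg NatTrans.app (pw.P.map_comp u v)) X.A

/-- The lifted powering structure on the Eilenberg–Moore category. -/
def LPow : Powering V T.Algebra where
  P := LPfun PF hund Φ Ψ hΨΦ hforget
  i X := Monad.Algebra.isoMk (pw.i X.A)
    (liftT_i_cond PF hund Φ Ψ hΦΨ hΨΦ hforget X)
  i_natural := by intro X Y f; ext; exact pw.i_natural f.f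
  p Γ Γ' X := Monad.Algebra.isoMk (pw.p Γ Γ' X.A)
    (liftT_p_cond PF hund Φ Ψ hΦΨ hΨΦ hforget Γ Γ' X)
  p_natural_obj := by intro Γ Γ' X Y f; ext; exact pw.p_natural_obj Γ Γ' f.f
  p_natural_ctx := by intro Γ Δ Γ' Δ' u v X; ext; exact pw.p_natural_ctx u v X.A
  coh_unit_inner Γ X := by ext; exact pw.coh_unit_inner Γ X.A
  coh_unit_outer Γ X := by ext; exact pw.coh_unit_outer Γ X.A
  coh_pentagon Γ₁ Γ₂ Γ₃ X := by ext; exact pw.coh_pentagon Γ₁ Γ₂ Γ₃ X.A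

/-- The lifting as an `EMLifting`. -/
def EML : EMLifting pw T :=
  ⟨LPow PF hund Φ Ψ hΦΨ hΨΦ hforget, rfl⟩

include hΨΦ hforget in
theorem LPow_obj (Γ : V) (A : Endofunctor.Algebra F₀) :
    ((LPow PF hund Φ Ψ hΦΨ hΨΦ hforget).P.obj (op Γ)).obj (Ψ.obj A)
      = Ψ.obj (liftAlg PF Γ A) := by
  show liftT PF Φ Ψ hΨΦ hforget Γ (Ψ.obj A) = _
  rw [liftT_eq PF Φ Ψ hΨΦ hforget Γ (Ψ.obj A), ePhiPsi Φ Ψ hΨΦ A]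

end LiftPow

section PM

variable (hund : ∀ {X Y : C} (f : X ⟶ Y),
      PF.pmap (f ≫ (pw.i Y).hom) = F₀.map f ≫ (pw.i (F₀.obj Y)).hom)
variable {T : Monad C} (Φ : T.Algebra ⥤ Endofunctor.Algebra F₀)
  (Ψ : Endofunctor.Algebra F₀ ⥤ T.Algebra)
  (hΦΨ : Φ ⋙ Ψ = 𝟭 T.Algebra) (hΨΦ : Ψ ⋙ Φ = 𝟭 (Endofunctor.Algebra F₀))
  (hforget : Φ ⋙ Endofunctor.Algebra.forget F₀ = T.forget)

/-- The T-algebra structure on `Γ ⋔ T Y`. -/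
def sigma (Γ : V) (Y : C) :
    (T : C ⥤ C).obj ((pw.P.obj (op Γ)).obj (T.obj Y)) ⟶ (pw.P.obj (op Γ)).obj (T.obj Y) :=
  (liftT PF Φ Ψ hΨΦ hforget Γ (T.free.obj Y)).a

theorem sigma_unit (Γ : V) (Y : C) :
    T.η.app _ ≫ sigma PF Φ Ψ hΨΦ hforget Γ Y = 𝟙 _ :=
  (liftT PF Φ Ψ hΨΦ hforget Γ (T.free.obj Y)).unit

theorem sigma_assoc (Γ : V) (Y : C) :
    T.μ.app _ ≫ sigma PF Φ Ψ hΨΦ hforget Γ Y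
      = (T : C ⥤ C).map (sigma PF Φ Ψ hΨΦ hforget Γ Y) ≫ sigma PF Φ Ψ hΨΦ hforget Γ Y :=
  (liftT PF Φ Ψ hΨΦ hforget Γ (T.free.obj Y)).assoc

/-- The powered extension operation. -/
def pext' (Γ : V) {X Y : C} (f : X ⟶ (pw.P.obj (op Γ)).obj (T.obj Y)) :
    T.obj X ⟶ (pw.P.obj (op Γ)).obj (T.obj Y) :=
  (T : C ⥤ C).map f ≫ sigma PF Φ Ψ hΨΦ hforget Γ Y

include hund hΦΨ hΨΦ hforget

theorem sigma_i (X : C) :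
    (T : C ⥤ C).map (pw.i (T.obj X)).hom ≫ sigma PF Φ Ψ hΨΦ hforget (𝟙_ V) X
      = T.μ.app X ≫ (pw.i (T.obj X)).hom :=
  liftT_i_cond PF hund Φ Ψ hΦΨ hΨΦ hforget (T.free.obj X)

omit hund hΦΨ in
theorem pext_alghom (Γ : V) {X Y : C} (f : X ⟶ (pw.P.obj (op Γ)).obj (T.obj Y)) :
    (T : C ⥤ C).map (pext' PF Φ Ψ hΨΦ hforget Γ f) ≫ sigma PF Φ Ψ hΨΦ hforget Γ Y
      = T.μ.app X ≫ pext' PF Φ Ψ hΨΦ hforget Γ f := by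
  dsimp only [pext']
  rw [Functor.map_comp, Category.assoc, ← sigma_assoc PF Φ Ψ hΨΦ hforget Γ Y,
    ← Category.assoc]
  have h : (T : C ⥤ C).map ((T : C ⥤ C).map f) ≫ T.μ.app _ = T.μ.app X ≫ (T : C ⥤ C).map f :=
    T.μ.naturality f
  rw [h, Category.assoc]

/-- The canonical powered monad structure on `T`. -/
def PMS : PoweredMonadStr pw T where
  pext {Γ X Y} f := pext' PF Φ Ψ hΨΦ hforget Γ f
  natural {Γ Δ} u {X Y} f := by
    dsimp only [pext', sigma]
    have cond : (T : C ⥤ C).map ((pw.P.map u.op).app (T.obj Y))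
          ≫ (liftT PF Φ Ψ hΨΦ hforget Γ (T.free.obj Y)).a
        = (liftT PF Φ Ψ hΨΦ hforget Δ (T.free.obj Y)).a ≫ (pw.P.map u.op).app (T.obj Y) :=
      liftT_ctx_cond PF hund Φ Ψ hΨΦ hforget (u.op) (T.free.obj Y)
    rw [Functor.map_comp]
    exact ((Category.assoc _ _ _).trans (congrArg (T.map f ≫ ·) cond)).trans
      (Category.assoc _ _ _).symm
  law_unit X := by
    show (T : C ⥤ C).map (T.η.app X ≫ (pw.i (T.obj X)).hom) ≫ _ = _
    rw [Functor.map_comp, Category.assoc, sigma_i PF hund Φ Ψ hΦΨ hΨΦ hforget X,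
      ← Category.assoc]
    simp
  law_pext_unit {Γ X Y} f := by
    dsimp only [pext']
    rw [← Category.assoc, ← T.η.naturality f, Category.assoc]
    have := sigma_unit PF Φ Ψ hΨΦ hforget Γ Y
    dsimp at this ⊢
    rw [this, Category.comp_id]
  law_assoc {Γ Γ'} {X Y Z} f g := by
    have hK : (T : C ⥤ C).map ((pw.P.obj (op Γ)).map (pext' PF Φ Ψ hΨΦ hforget Γ' g)
            ≫ (pw.p Γ Γ' (T.obj Z)).hom)
          ≫ sigma PF Φ Ψ hΨΦ hforget (Γ' ⊗ Γ) Z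
        = sigma PF Φ Ψ hΨΦ hforget Γ Y
            ≫ (pw.P.obj (op Γ)).map (pext' PF Φ Ψ hΨΦ hforget Γ' g)
            ≫ (pw.p Γ Γ' (T.obj Z)).hom := by
      rw [Functor.map_comp, Category.assoc]
      have cond2 : (T : C ⥤ C).map (pw.p Γ Γ' (T.obj Z)).hom
            ≫ sigma PF Φ Ψ hΨΦ hforget (Γ' ⊗ Γ) Z
          = (liftT PF Φ Ψ hΨΦ hforget Γ (liftT PF Φ Ψ hΨΦ hforget Γ' (T.free.obj Z))).a
            ≫ (pw.p Γ Γ' (T.obj Z)).hom :=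
        liftT_p_cond PF hund Φ Ψ hΦΨ hΨΦ hforget Γ Γ' (T.free.obj Z)
      rw [cond2]
      have cond1 : (T : C ⥤ C).map ((pw.P.obj (op Γ)).map (pext' PF Φ Ψ hΨΦ hforget Γ' g))
            ≫ (liftT PF Φ Ψ hΨΦ hforget Γ (liftT PF Φ Ψ hΨΦ hforget Γ' (T.free.obj Z))).a
          = sigma PF Φ Ψ hΨΦ hforget Γ Y
            ≫ (pw.P.obj (op Γ)).map (pext' PF Φ Ψ hΨΦ hforget Γ' g) :=
        liftT_map_cond PF hund Φ Ψ hΨΦ hforget Γ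
          (X := T.free.obj Y) (Y := liftT PF Φ Ψ hΨΦ hforget Γ' (T.free.obj Z))
          ⟨pext' PF Φ Ψ hΨΦ hforget Γ' g, pext_alghom PF Φ Ψ hΨΦ hforget Γ' g⟩
      exact (Category.assoc _ _ _).symm.trans
        ((congrArg (· ≫ (pw.p Γ Γ' (T.obj Z)).hom) cond1).trans (Category.assoc _ _ _))
    show ((T : C ⥤ C).map f ≫ sigma PF Φ Ψ hΨΦ hforget Γ Y)
        ≫ (pw.P.obj (op Γ)).map (pext' PF Φ Ψ hΨΦ hforget Γ' g) ≫ (pw.p Γ Γ' (T.obj Z)).hom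
      = (T : C ⥤ C).map (f ≫ (pw.P.obj (op Γ)).map (pext' PF Φ Ψ hΨΦ hforget Γ' g)
          ≫ (pw.p Γ Γ' (T.obj Z)).hom) ≫ sigma PF Φ Ψ hΨΦ hforget (Γ' ⊗ Γ) Z
    rw [Functor.map_comp]
    simp only [Category.assoc]
    rw [hK]
include hund hΦΨ hΨΦ hforget in
theorem PMS_underlies : (PMS PF hund Φ Ψ hΦΨ hΨΦ hforget).Underlies := by
  constructor
  · intro X Y f
    show (T : C ⥤ C).map f
        = pext' PF Φ Ψ hΨΦ hforget (𝟙_ V) (f ≫ T.η.app Y ≫ (pw.i (T.obj Y)).hom)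
            ≫ (pw.i (T.obj Y)).inv
    dsimp only [pext']
    rw [Functor.map_comp, Functor.map_comp, Category.assoc, Category.assoc]
    have hi := sigma_i PF hund Φ Ψ hΦΨ hΨΦ hforget Y
    slice_rhs 3 4 => rw [hi]
    simp
  · intro X
    show T.μ.app X
        = pext' PF Φ Ψ hΨΦ hforget (𝟙_ V) ((pw.i (T.obj X)).hom) ≫ (pw.i (T.obj X)).inv
    dsimp only [pext']
    have hi := sigma_i PF hund Φ Ψ hΦΨ hΨΦ hforget X
    rw [Category.assoc]
    slice_rhs 1 2 => rw [hi]
    simp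

end PM

end S18

/-- if `F₀` is a powered endofunctor on a category `C` powered
over `V` (a functor with a powered functor structure `PF` whose underlying
functor is `F₀`), and `T` is the algebraically free monad on `F₀` (there is an
isomorphism of categories `F₀-Alg ≅ C^T` commuting with the forgetful
functors), then `T` carries a powered monad structure, obtained from a lifting
of the powering to the Eilenberg–Moore category which, transported to
`F₀`-algebras, is given by `Γ ⋔_F (A, a) = (Γ ⋔ A, (Γ ⋔ a) ∘ F⟨Γ⟩ 𝟙)`. -/
theorem statement18 (pw : Powering V C) (F₀ : C ⥤ C)
    (PF : PoweredFunctorStr pw pw F₀.obj)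
    (hund : ∀ {X Y : C} (f : X ⟶ Y),
      PF.pmap (f ≫ (pw.i Y).hom) = F₀.map f ≫ (pw.i (F₀.obj Y)).hom)
    (T : Monad C)
    (Φ : T.Algebra ⥤ Endofunctor.Algebra F₀)
    (Ψ : Endofunctor.Algebra F₀ ⥤ T.Algebra)
    (hΦΨ : Φ ⋙ Ψ = 𝟭 _) (hΨΦ : Ψ ⋙ Φ = 𝟭 _)
    (hforget : Φ ⋙ Endofunctor.Algebra.forget F₀ = T.forget) :
    (∃ S : PoweredMonadStr pw T, S.Underlies) ∧
    (∃ L : EMLifting pw T,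
      ∀ (Γ : V) (A : Endofunctor.Algebra F₀),
        (L.L.P.obj (op Γ)).obj (Ψ.obj A)
          = Ψ.obj ⟨(pw.P.obj (op Γ)).obj A.a,
              PF.pmap (𝟙 ((pw.P.obj (op Γ)).obj A.a))
                ≫ (pw.P.obj (op Γ)).map A.str⟩) := by
  refine ⟨⟨S18.PMS PF hund Φ Ψ hΦΨ hΨΦ hforget,
      S18.PMS_underlies PF hund Φ Ψ hΦΨ hΨΦ hforget⟩,
    ⟨S18.EML PF hund Φ Ψ hΦΨ hΨΦ hforget, ?_⟩⟩
  intro Γ A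
  exact S18.LPow_obj PF hund Φ Ψ hΦΨ hΨΦ hforget Γ A
end
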